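/- arXiv:2104.07752 — 7 statements merged into one kernel-verified Lean document; each statement's English description precedes it below -/
import Mathlib

section
/- Let X be a p-variate random vector with law μ. A probability measure λ on ℝ^{2p} is the law of (X, X̃) for some knockoff copy X̃ of X if and only if there exists a probability measure π on ℝ^{2p} such that λ = 2^{-p} Σ_{f ∈ F} π ∘ f⁻¹ and 2^{-p} Σ_{f ∈ F} π{x ∈ ℝ^{2p} : f(x) ∈ A × ℝ^p} = μ(A) for every Borel set A ⊆ ℝ^p. -/
open MeasureTheory Set ENNReal
open scoped symmDiff

/-- The swap map `f_S` on `ℝ^p × ℝ^p`. -/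
noncomputable def swapMap (p : ℕ) (S : Finset (Fin p)) :
    ((Fin p → ℝ) × (Fin p → ℝ)) → ((Fin p → ℝ) × (Fin p → ℝ)) :=
  fun z => (fun i => if i ∈ S then z.2 i else z.1 i,
            fun i => if i ∈ S then z.1 i else z.2 i)

lemma swapMap_measurable (p : ℕ) (S : Finset (Fin p)) : Measurable (swapMap p S) := by
  apply Measurable.prod
  · apply measurable_pi_lambda
    intro i
    by_cases h : i ∈ S <;> simp only [swapMap, h, if_true, if_false]
    · exact (measurable_pi_apply i).comp measurable_snd
    · exact (measurable_pi_apply i).comp measurable_fst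
  · apply measurable_pi_lambda
    intro i
    by_cases h : i ∈ S <;> simp only [swapMap, h, if_true, if_false]
    · exact (measurable_pi_apply i).comp measurable_fst
    · exact (measurable_pi_apply i).comp measurable_snd

lemma swapMap_comp (p : ℕ) (S T : Finset (Fin p)) :
    swapMap p T ∘ swapMap p S = swapMap p (S ∆ T) := by
  funext z
  simp only [Function.comp_apply, swapMap, Prod.mk.injEq]
  constructor <;> funext i <;>
    by_cases hS : i ∈ S <;> by_cases hT : i ∈ T <;>
    simp [Finset.mem_symmDiff, hS, hT]

lemma symmDiff_sum {M : Type*} [AddCommMonoid M] (p : ℕ) (T : Finset (Fin p))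
    (g : Finset (Fin p) → M) :
    ∑ S : Finset (Fin p), g (S ∆ T) = ∑ S : Finset (Fin p), g S := by
  have invol : Function.Involutive (fun S : Finset (Fin p) => S ∆ T) := by
    intro S; simp [symmDiff_symmDiff_cancel_right]
  exact Equiv.sum_comp invol.toPerm g

lemma two_pow_ne_top (p : ℕ) : ((2 : ℝ≥0∞) ^ p) ≠ ⊤ := by
  exact ENNReal.pow_ne_top (by norm_num)

lemma two_pow_ne_zero (p : ℕ) : ((2 : ℝ≥0∞) ^ p) ≠ 0 := by
  positivity

/-- Characterization of knockoff distributions: `λ` is the law of `(X, X̃)` for some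
knockoff copy `X̃` of `X` (i.e. `λ` is `F`-invariant and its first-`p`-coordinate marginal
is `μ = L(X)`) iff there is a probability `π` with `λ = 2^{-p} ∑_{f ∈ F} π ∘ f⁻¹` and
`2^{-p} ∑_{f ∈ F} π {x : f(x) ∈ A × ℝ^p} = μ(A)` for all Borel `A`. -/
theorem knockoff_characterization (p : ℕ) (hp : 2 ≤ p)
    (μX : Measure (Fin p → ℝ)) [IsProbabilityMeasure μX]
    (lam : Measure ((Fin p → ℝ) × (Fin p → ℝ))) [IsProbabilityMeasure lam] :
    ((∀ S : Finset (Fin p), lam.map (swapMap p S) = lam) ∧ lam.map Prod.fst = μX) ↔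
    ∃ π : Measure ((Fin p → ℝ) × (Fin p → ℝ)), IsProbabilityMeasure π ∧
      lam = ((2 : ℝ≥0∞) ^ p)⁻¹ • ∑ S : Finset (Fin p), π.map (swapMap p S) ∧
      ∀ A : Set (Fin p → ℝ), MeasurableSet A →
        ((2 : ℝ≥0∞) ^ p)⁻¹ *
          ∑ S : Finset (Fin p), π {z | (swapMap p S z).1 ∈ A} = μX A := by
  have hcard : (Fintype.card (Finset (Fin p)) : ℝ≥0∞) = (2 : ℝ≥0∞) ^ p := by
    rw [Fintype.card_finset, Fintype.card_fin]
    push_cast; ring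
  constructor
  · rintro ⟨hinv, hmarg⟩
    refine ⟨lam, inferInstance, ?_, ?_⟩
    · ext E hE
      rw [Measure.smul_apply, Measure.finset_sum_apply, smul_eq_mul]
      have : ∀ S : Finset (Fin p), (lam.map (swapMap p S)) E = lam E := fun S => by
        rw [hinv S]
      rw [Finset.sum_congr rfl (fun S _ => this S), Finset.sum_const, nsmul_eq_mul,
        Finset.card_univ, hcard, ← mul_assoc,
        ENNReal.inv_mul_cancel (two_pow_ne_zero p) (two_pow_ne_top p), one_mul]
    · intro A hA
      have key : ∀ S : Finset (Fin p), lam {z | (swapMap p S z).1 ∈ A} = μX A := by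
        intro S
        have h1 : lam.map (swapMap p S) (Prod.fst ⁻¹' A) = lam (Prod.fst ⁻¹' A) := by
          rw [hinv S]
        rw [Measure.map_apply (swapMap_measurable p S) (measurable_fst hA)] at h1
        have h2 : lam (Prod.fst ⁻¹' A) = μX A := by
          rw [← hmarg, Measure.map_apply measurable_fst hA]
        rw [← h2, ← h1]; rfl
      rw [Finset.sum_congr rfl (fun S _ => key S), Finset.sum_const, nsmul_eq_mul,
        Finset.card_univ, hcard, ← mul_assoc,
        ENNReal.inv_mul_cancel (two_pow_ne_zero p) (two_pow_ne_top p), one_mul]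
  · rintro ⟨π, hπ, hlam, hμ⟩
    constructor
    · intro T
      ext E hE
      rw [Measure.map_apply (swapMap_measurable p T) hE, hlam,
        Measure.smul_apply, Measure.smul_apply, Measure.finset_sum_apply,
        Measure.finset_sum_apply]
      congr 1
      have : ∀ S : Finset (Fin p),
          (π.map (swapMap p S)) (swapMap p T ⁻¹' E) = (π.map (swapMap p (S ∆ T))) E := by
        intro S
        rw [Measure.map_apply (swapMap_measurable p S)
            ((swapMap_measurable p T) hE),
          Measure.map_apply (swapMap_measurable p _) hE,
          ← Set.preimage_comp, swapMap_comp]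
      rw [Finset.sum_congr rfl (fun S _ => this S)]
      exact symmDiff_sum p T (fun S => (π.map (swapMap p S)) E)
    · ext A hA
      rw [Measure.map_apply measurable_fst hA, hlam, Measure.smul_apply,
        Measure.finset_sum_apply, smul_eq_mul, ← hμ A hA]
      congr 1
      refine Finset.sum_congr rfl fun S _ => ?_
      rw [Measure.map_apply (swapMap_measurable p S) (measurable_fst hA)]
      rfl
end

section
/- For an F-invariant probability measure λ on ℝ^{2p} and any probability π: the three conditions (a) λ = 2^{-p} Σ_{f∈F} π∘f⁻¹, (b) π ≪ λ with density q satisfying Σ_{f∈F} q∘f = 2^p λ-a.e., and (c) π = λ on the σ-field of F-invariant Borel sets, are pairwise equivalent. -/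
open MeasureTheory Set ENNReal

open scoped symmDiff

lemma swapMap_empty (p : ℕ) (z : (Fin p → ℝ) × (Fin p → ℝ)) : swapMap p ∅ z = z := by
  simp [swapMap]

lemma swapMap_swapMap (p : ℕ) (S T : Finset (Fin p)) (z : (Fin p → ℝ) × (Fin p → ℝ)) :
    swapMap p S (swapMap p T z) = swapMap p (S ∆ T) z := by
  unfold swapMap
  refine Prod.ext ?_ ?_ <;> funext i <;>
    by_cases hS : i ∈ S <;> by_cases hT : i ∈ T <;>
    simp [Finset.mem_symmDiff, hS, hT]

lemma swapMap_invol (p : ℕ) (S : Finset (Fin p)) (z : (Fin p → ℝ) × (Fin p → ℝ)) :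
    swapMap p S (swapMap p S z) = z := by
  rw [swapMap_swapMap, symmDiff_self]
  exact swapMap_empty p z

lemma swapMap_preimage_comp (p : ℕ) (S T : Finset (Fin p)) (A : Set ((Fin p → ℝ) × (Fin p → ℝ))) :
    swapMap p T ⁻¹' (swapMap p S ⁻¹' A) = swapMap p (S ∆ T) ⁻¹' A := by
  ext z; simp [Set.mem_preimage, swapMap_swapMap]

def symmDiffEquiv (p : ℕ) (T : Finset (Fin p)) : Finset (Fin p) ≃ Finset (Fin p) :=
  Function.Involutive.toPerm (· ∆ T) (fun S => symmDiff_symmDiff_cancel_right T S)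

lemma map_withDensity (p : ℕ) (S : Finset (Fin p))
    (lam : Measure ((Fin p → ℝ) × (Fin p → ℝ)))
    (hinv : lam.map (swapMap p S) = lam) {q : ((Fin p → ℝ) × (Fin p → ℝ)) → ℝ≥0∞}
    (hq : Measurable q) :
    (lam.withDensity q).map (swapMap p S) = lam.withDensity (fun z => q (swapMap p S z)) := by
  have hm := swapMap_measurable p S
  ext A hA
  rw [Measure.map_apply hm hA, withDensity_apply _ (hm hA), withDensity_apply _ hA,
      ← lintegral_indicator (hm hA), ← lintegral_indicator hA]
  have key : ∀ z, A.indicator (fun z => q (swapMap p S z)) z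
      = (swapMap p S ⁻¹' A).indicator q (swapMap p S z) := by
    intro z
    by_cases hz : z ∈ A
    · have h2 : swapMap p S z ∈ swapMap p S ⁻¹' A := by
        simp [Set.mem_preimage, swapMap_invol, hz]
      simp [hz, h2]
    · have h2 : swapMap p S z ∉ swapMap p S ⁻¹' A := by
        simp [Set.mem_preimage, swapMap_invol, hz]
      simp [hz, h2]
  calc ∫⁻ z, (swapMap p S ⁻¹' A).indicator q z ∂lam
      = ∫⁻ z, (swapMap p S ⁻¹' A).indicator q z ∂(lam.map (swapMap p S)) := by rw [hinv]
    _ = ∫⁻ z, (swapMap p S ⁻¹' A).indicator q (swapMap p S z) ∂lam :=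
        lintegral_map (hq.indicator (hm hA)) hm
    _ = ∫⁻ z, A.indicator (fun z => q (swapMap p S z)) z ∂lam := by
        exact lintegral_congr fun z => (key z).symm

lemma lintegral_congr_of_invariant (p : ℕ)
    (ν₁ ν₂ : Measure ((Fin p → ℝ) × (Fin p → ℝ)))
    (h : ∀ A, MeasurableSet A → (∀ S : Finset (Fin p), swapMap p S ⁻¹' A = A) → ν₁ A = ν₂ A)
    {g : ((Fin p → ℝ) × (Fin p → ℝ)) → ℝ≥0∞} (hg : Measurable g)
    (hgi : ∀ S z, g (swapMap p S z) = g z) :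
    ∫⁻ z, g z ∂ν₁ = ∫⁻ z, g z ∂ν₂ := by
  rw [lintegral_eq_iSup_eapprox_lintegral hg, lintegral_eq_iSup_eapprox_lintegral hg]
  congr 1
  funext n
  unfold SimpleFunc.lintegral
  refine Finset.sum_congr rfl fun y _ => ?_
  congr 1
  refine h _ (SimpleFunc.measurableSet_fiber _ _) fun S => ?_
  ext z
  simp only [Set.mem_preimage, Set.mem_singleton_iff]
  have hfix : (SimpleFunc.eapprox g n) (swapMap p S z) = (SimpleFunc.eapprox g n) z := by
    have e := SimpleFunc.eapprox_comp (n := n) hg (swapMap_measurable p S)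
    have hc : g ∘ swapMap p S = g := funext fun z => hgi S z
    calc (SimpleFunc.eapprox g n) (swapMap p S z)
        = (SimpleFunc.eapprox (g ∘ swapMap p S) n) z := by rw [e]; rfl
      _ = (SimpleFunc.eapprox g n) z := by rw [hc]
  rw [hfix]

lemma measure_eq_of_invariant (p : ℕ)
    (ν₁ ν₂ : Measure ((Fin p → ℝ) × (Fin p → ℝ)))
    (hν₁ : ∀ S, ν₁.map (swapMap p S) = ν₁) (hν₂ : ∀ S, ν₂.map (swapMap p S) = ν₂)
    (h : ∀ A, MeasurableSet A → (∀ S : Finset (Fin p), swapMap p S ⁻¹' A = A) → ν₁ A = ν₂ A) :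
    ν₁ = ν₂ := by
  classical
  ext B hB
  set g : ((Fin p → ℝ) × (Fin p → ℝ)) → ℝ≥0∞ := fun z =>
    ((2:ℝ≥0∞)^p)⁻¹ * ∑ S : Finset (Fin p), (swapMap p S ⁻¹' B).indicator 1 z with hg
  have hgm : Measurable g :=
    (Finset.measurable_sum _ fun S _ =>
      measurable_one.indicator ((swapMap_measurable p S) hB)).const_mul _
  have key : ∀ (T : Finset (Fin p)) z (S : Finset (Fin p)),
      ((swapMap p S ⁻¹' B).indicator (1 : ((Fin p → ℝ) × (Fin p → ℝ)) → ℝ≥0∞)) (swapMap p T z)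
      = ((swapMap p (S ∆ T) ⁻¹' B).indicator (1 : ((Fin p → ℝ) × (Fin p → ℝ)) → ℝ≥0∞)) z := by
    intro T z S
    have hiff : swapMap p T z ∈ swapMap p S ⁻¹' B ↔ z ∈ swapMap p (S ∆ T) ⁻¹' B := by
      rw [← swapMap_preimage_comp]; rfl
    rw [Set.indicator_apply, Set.indicator_apply]
    exact if_congr hiff rfl rfl
  have hgi : ∀ T z, g (swapMap p T z) = g z := by
    intro T z
    simp only [hg]
    congr 1
    calc ∑ S : Finset (Fin p), (swapMap p S ⁻¹' B).indicator 1 (swapMap p T z)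
        = ∑ S : Finset (Fin p), (swapMap p (S ∆ T) ⁻¹' B).indicator 1 z :=
          Finset.sum_congr rfl fun S _ => key T z S
      _ = ∑ S : Finset (Fin p), (swapMap p S ⁻¹' B).indicator 1 z :=
          Fintype.sum_equiv (symmDiffEquiv p T) _ _ (fun S => rfl)
  have hint : ∀ ν : Measure ((Fin p → ℝ) × (Fin p → ℝ)),
      (∀ S, ν.map (swapMap p S) = ν) → ∫⁻ z, g z ∂ν = ν B := by
    intro ν hν
    simp only [hg]
    have hind : ∀ S : Finset (Fin p),
        Measurable ((swapMap p S ⁻¹' B).indicator (1 : ((Fin p → ℝ) × (Fin p → ℝ)) → ℝ≥0∞)) :=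
      fun S => measurable_one.indicator ((swapMap_measurable p S) hB)
    have hsum : Measurable fun z =>
        ∑ S : Finset (Fin p), (swapMap p S ⁻¹' B).indicator (1 : ((Fin p → ℝ) × (Fin p → ℝ)) → ℝ≥0∞) z :=
      Finset.measurable_sum _ fun S _ => hind S
    rw [lintegral_const_mul _ hsum, lintegral_finset_sum _ fun S _ => hind S]
    have hterm : ∀ S : Finset (Fin p),
        ∫⁻ z, (swapMap p S ⁻¹' B).indicator 1 z ∂ν = ν B := by
      intro S
      rw [lintegral_indicator_one ((swapMap_measurable p S) hB),
          ← Measure.map_apply (swapMap_measurable p S) hB, hν S]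
    simp_rw [hterm]
    rw [Finset.sum_const, Finset.card_univ, Fintype.card_finset, Fintype.card_fin,
        nsmul_eq_mul, ← mul_assoc, Nat.cast_pow, Nat.cast_ofNat,
        ENNReal.inv_mul_cancel (pow_ne_zero p (by norm_num)) (ENNReal.pow_ne_top (by norm_num)),
        one_mul]
  rw [← hint ν₁ hν₁, ← hint ν₂ hν₂]
  exact lintegral_congr_of_invariant p ν₁ ν₂ h hgm hgi

lemma withDensity_finset_sum'' {α : Type*} [MeasurableSpace α] (μ : Measure α) {ι : Type*}
    (s : Finset ι) (f : ι → α → ℝ≥0∞) (hf : ∀ i, Measurable (f i)) :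
    μ.withDensity (fun a => ∑ i ∈ s, f i a) = ∑ i ∈ s, μ.withDensity (f i) := by
  classical
  induction s using Finset.induction with
  | empty => simp
  | @insert j t h ih =>
      have : (fun a => ∑ i ∈ insert j t, f i a)
          = f j + fun a => ∑ i ∈ t, f i a := by
        funext a; simp [Finset.sum_insert h]
      rw [this, withDensity_add_left (hf j), ih, Finset.sum_insert h]

lemma card_sum_ennreal (p : ℕ) (x : ℝ≥0∞) :
    ∑ _S : Finset (Fin p), x = (2:ℝ≥0∞)^p * x := by
  rw [Finset.sum_const, Finset.card_univ, Fintype.card_finset, Fintype.card_fin,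
    nsmul_eq_mul, Nat.cast_pow, Nat.cast_ofNat]

/-- For an `F`-invariant probability `λ` and any probability `π`, the following are
pairwise equivalent: (a) `λ = 2^{-p} ∑_{f∈F} π∘f⁻¹`; (b) `π ≪ λ` with a density `q`
satisfying `∑_{f∈F} q∘f = 2^p` `λ`-a.e.; (c) `π = λ` on the σ-field of `F`-invariant
Borel sets. -/
theorem three_equivalences (p : ℕ) (hp : 2 ≤ p)
    (lam π : Measure ((Fin p → ℝ) × (Fin p → ℝ)))
    [IsProbabilityMeasure lam] [IsProbabilityMeasure π]
    (hinv : ∀ S : Finset (Fin p), lam.map (swapMap p S) = lam) :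
    ((lam = ((2 : ℝ≥0∞) ^ p)⁻¹ • ∑ S : Finset (Fin p), π.map (swapMap p S)) ↔
      (π ≪ lam ∧ ∃ q : ((Fin p → ℝ) × (Fin p → ℝ)) → ℝ≥0∞, Measurable q ∧
        π = lam.withDensity q ∧
        ∀ᵐ z ∂lam, ∑ S : Finset (Fin p), q (swapMap p S z) = (2 : ℝ≥0∞) ^ p)) ∧
    ((π ≪ lam ∧ ∃ q : ((Fin p → ℝ) × (Fin p → ℝ)) → ℝ≥0∞, Measurable q ∧
        π = lam.withDensity q ∧
        ∀ᵐ z ∂lam, ∑ S : Finset (Fin p), q (swapMap p S z) = (2 : ℝ≥0∞) ^ p) ↔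
      (∀ A : Set ((Fin p → ℝ) × (Fin p → ℝ)), MeasurableSet A →
        (∀ S : Finset (Fin p), swapMap p S ⁻¹' A = A) → π A = lam A)) := by
  classical
  have hm : ∀ S : Finset (Fin p), Measurable (swapMap p S) := swapMap_measurable p
  have h2p0 : ((2:ℝ≥0∞)^p) ≠ 0 := pow_ne_zero p (by norm_num)
  have h2pt : ((2:ℝ≥0∞)^p) ≠ ⊤ := ENNReal.pow_ne_top (by norm_num)
  have hempty : ∀ A : Set ((Fin p → ℝ) × (Fin p → ℝ)), swapMap p ∅ ⁻¹' A = A := by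
    intro A; ext z; simp [Set.mem_preimage, swapMap_empty]
  -- with a density q, the symmetrized sum is a withDensity measure
  have hsumwd : ∀ q : ((Fin p → ℝ) × (Fin p → ℝ)) → ℝ≥0∞, Measurable q →
      π = lam.withDensity q →
      ∑ S : Finset (Fin p), π.map (swapMap p S)
        = lam.withDensity (fun z => ∑ S : Finset (Fin p), q (swapMap p S z)) := by
    intro q hqm hq
    calc ∑ S : Finset (Fin p), π.map (swapMap p S)
        = ∑ S : Finset (Fin p), lam.withDensity (fun z => q (swapMap p S z)) :=
          Finset.sum_congr rfl fun S _ => by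
            rw [hq]; exact map_withDensity p S lam (hinv S) hqm
      _ = lam.withDensity (fun z => ∑ S : Finset (Fin p), q (swapMap p S z)) :=
          (withDensity_finset_sum'' lam Finset.univ (fun S z => q (swapMap p S z))
            (fun S => hqm.comp (hm S))).symm
  -- (b) → (a)
  have hba : (π ≪ lam ∧ ∃ q : ((Fin p → ℝ) × (Fin p → ℝ)) → ℝ≥0∞, Measurable q ∧
        π = lam.withDensity q ∧
        ∀ᵐ z ∂lam, ∑ S : Finset (Fin p), q (swapMap p S z) = (2 : ℝ≥0∞) ^ p) →
      lam = ((2 : ℝ≥0∞) ^ p)⁻¹ • ∑ S : Finset (Fin p), π.map (swapMap p S) := by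
    rintro ⟨-, q, hqm, hq, hae⟩
    rw [hsumwd q hqm hq, withDensity_congr_ae hae, withDensity_const, smul_smul,
      ENNReal.inv_mul_cancel h2p0 h2pt, one_smul]
  -- (a) → (b)
  have hab : (lam = ((2 : ℝ≥0∞) ^ p)⁻¹ • ∑ S : Finset (Fin p), π.map (swapMap p S)) →
      (π ≪ lam ∧ ∃ q : ((Fin p → ℝ) × (Fin p → ℝ)) → ℝ≥0∞, Measurable q ∧
        π = lam.withDensity q ∧
        ∀ᵐ z ∂lam, ∑ S : Finset (Fin p), q (swapMap p S z) = (2 : ℝ≥0∞) ^ p) := by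
    intro ha
    have habs : π ≪ lam := by
      refine Measure.AbsolutelyContinuous.mk fun A hA h0 => ?_
      rw [ha, Measure.smul_apply, smul_eq_mul] at h0
      have hsum0 : (∑ S : Finset (Fin p), π.map (swapMap p S)) A = 0 := by
        rcases mul_eq_zero.mp h0 with h | h
        · exact absurd h (ENNReal.inv_ne_zero.mpr h2pt)
        · exact h
      rw [Measure.finset_sum_apply] at hsum0
      have hzero := (Finset.sum_eq_zero_iff.mp hsum0) ∅ (Finset.mem_univ ∅)
      rwa [Measure.map_apply (hm ∅) hA, hempty A] at hzero
    refine ⟨habs, π.rnDeriv lam, Measure.measurable_rnDeriv π lam,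
      (Measure.withDensity_rnDeriv_eq π lam habs).symm, ?_⟩
    set q := π.rnDeriv lam with hqdef
    have hq : π = lam.withDensity q := (Measure.withDensity_rnDeriv_eq π lam habs).symm
    have hwd : lam.withDensity (fun _ => (1:ℝ≥0∞))
        = lam.withDensity (fun z => ((2:ℝ≥0∞)^p)⁻¹ * ∑ S : Finset (Fin p), q (swapMap p S z)) := by
      have : lam.withDensity (fun z => ((2:ℝ≥0∞)^p)⁻¹ * ∑ S : Finset (Fin p), q (swapMap p S z))
          = ((2:ℝ≥0∞)^p)⁻¹ • lam.withDensity (fun z => ∑ S : Finset (Fin p), q (swapMap p S z)) := by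
        rw [← withDensity_smul _ (by
          exact Finset.measurable_sum _ fun S _ => (Measure.measurable_rnDeriv π lam).comp (hm S))]
        rfl
      rw [this, ← hsumwd q (Measure.measurable_rnDeriv π lam) hq, ← ha]
      exact withDensity_one
    have hmeas2 : Measurable (fun z => ((2:ℝ≥0∞)^p)⁻¹ * ∑ S : Finset (Fin p), q (swapMap p S z)) :=
      (Finset.measurable_sum _ fun S _ =>
        (Measure.measurable_rnDeriv π lam).comp (hm S)).const_mul _
    have hae1 := (withDensity_eq_iff_of_sigmaFinite measurable_const.aemeasurable
      hmeas2.aemeasurable).mp hwd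
    filter_upwards [hae1] with z hz
    have h2 : (2:ℝ≥0∞)^p * 1
        = (2:ℝ≥0∞)^p * (((2:ℝ≥0∞)^p)⁻¹ * ∑ S : Finset (Fin p), q (swapMap p S z)) :=
      congrArg (fun x => (2:ℝ≥0∞)^p * x) hz
    rw [mul_one, ← mul_assoc, ENNReal.mul_inv_cancel h2p0 h2pt, one_mul] at h2
    exact h2.symm
  -- (b) → (c)
  have hbc : (π ≪ lam ∧ ∃ q : ((Fin p → ℝ) × (Fin p → ℝ)) → ℝ≥0∞, Measurable q ∧
        π = lam.withDensity q ∧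
        ∀ᵐ z ∂lam, ∑ S : Finset (Fin p), q (swapMap p S z) = (2 : ℝ≥0∞) ^ p) →
      (∀ A : Set ((Fin p → ℝ) × (Fin p → ℝ)), MeasurableSet A →
        (∀ S : Finset (Fin p), swapMap p S ⁻¹' A = A) → π A = lam A) := by
    rintro ⟨-, q, hqm, hq, hae⟩ A hA hAinv
    have hswap : ∀ S : Finset (Fin p),
        ∫⁻ z in A, q (swapMap p S z) ∂lam = ∫⁻ z in A, q z ∂lam := by
      intro S
      rw [← lintegral_indicator hA, ← lintegral_indicator hA]
      have key : ∀ z, A.indicator (fun z => q (swapMap p S z)) z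
          = A.indicator q (swapMap p S z) := by
        intro z
        by_cases hz : z ∈ A
        · have h2 : swapMap p S z ∈ A := by rw [← hAinv S] at hz; exact hz
          simp [hz, h2]
        · have h2 : swapMap p S z ∉ A := fun hh => hz (by rw [← hAinv S]; exact hh)
          simp [hz, h2]
      calc ∫⁻ z, A.indicator (fun z => q (swapMap p S z)) z ∂lam
          = ∫⁻ z, A.indicator q (swapMap p S z) ∂lam := lintegral_congr key
        _ = ∫⁻ z, A.indicator q z ∂(lam.map (swapMap p S)) :=
            (lintegral_map (hqm.indicator hA) (hm S)).symm
        _ = ∫⁻ z, A.indicator q z ∂lam := by rw [hinv S]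
    have hkey : (2:ℝ≥0∞)^p * lam A = (2:ℝ≥0∞)^p * π A := by
      calc (2:ℝ≥0∞)^p * lam A
          = ∫⁻ _ in A, (2:ℝ≥0∞)^p ∂lam := (setLIntegral_const A _).symm
        _ = ∫⁻ z in A, ∑ S : Finset (Fin p), q (swapMap p S z) ∂lam :=
            (lintegral_congr_ae (ae_restrict_of_ae hae)).symm
        _ = ∑ S : Finset (Fin p), ∫⁻ z in A, q (swapMap p S z) ∂lam :=
            lintegral_finset_sum _ fun S _ => hqm.comp (hm S)
        _ = ∑ S : Finset (Fin p), ∫⁻ z in A, q z ∂lam :=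
            Finset.sum_congr rfl fun S _ => hswap S
        _ = (2:ℝ≥0∞)^p * ∫⁻ z in A, q z ∂lam := card_sum_ennreal p _
        _ = (2:ℝ≥0∞)^p * π A := by rw [hq, withDensity_apply _ hA]
    exact ((ENNReal.mul_right_inj h2p0 h2pt).mp hkey).symm
  -- (c) → (a)
  have hca : (∀ A : Set ((Fin p → ℝ) × (Fin p → ℝ)), MeasurableSet A →
        (∀ S : Finset (Fin p), swapMap p S ⁻¹' A = A) → π A = lam A) →
      lam = ((2 : ℝ≥0∞) ^ p)⁻¹ • ∑ S : Finset (Fin p), π.map (swapMap p S) := by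
    intro hc
    set μ : Measure ((Fin p → ℝ) × (Fin p → ℝ)) :=
      ((2 : ℝ≥0∞) ^ p)⁻¹ • ∑ S : Finset (Fin p), π.map (swapMap p S) with hμdef
    have expand : ∀ B : Set ((Fin p → ℝ) × (Fin p → ℝ)), MeasurableSet B →
        μ B = ((2:ℝ≥0∞)^p)⁻¹ * ∑ S : Finset (Fin p), π (swapMap p S ⁻¹' B) := by
      intro B hB
      rw [hμdef, Measure.smul_apply, smul_eq_mul, Measure.finset_sum_apply]
      congr 1
      exact Finset.sum_congr rfl fun S _ => Measure.map_apply (hm S) hB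
    have hμinv : ∀ T : Finset (Fin p), μ.map (swapMap p T) = μ := by
      intro T
      ext A hA
      rw [Measure.map_apply (hm T) hA, expand _ ((hm T) hA), expand _ hA]
      congr 1
      calc ∑ S : Finset (Fin p), π (swapMap p S ⁻¹' (swapMap p T ⁻¹' A))
          = ∑ S : Finset (Fin p), π (swapMap p (S ∆ T) ⁻¹' A) :=
            Finset.sum_congr rfl fun S _ => by
              rw [swapMap_preimage_comp p T S A, symmDiff_comm]
        _ = ∑ S : Finset (Fin p), π (swapMap p S ⁻¹' A) :=
            Fintype.sum_equiv (symmDiffEquiv p T) _ _ (fun S => rfl)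
    refine measure_eq_of_invariant p lam μ hinv hμinv fun A hA hAinv => ?_
    rw [expand A hA]
    have : ∀ S : Finset (Fin p), π (swapMap p S ⁻¹' A) = π A := fun S => by rw [hAinv S]
    simp_rw [this]
    rw [card_sum_ennreal, ← mul_assoc, ENNReal.inv_mul_cancel h2p0 h2pt, one_mul, hc A hA hAinv]
  exact ⟨⟨hab, hba⟩, ⟨hbc, fun hc => hab (hca hc)⟩⟩
end

section
/- Let F be the distribution function of X with p-copula C, so F(x) = C(F₁(x₁),...,F_p(x_p)), and let D₁,...,D_p be 2-copulas. Define H(x) = C(D₁(F₁(x₁),F₁(x_{p+1})),...,D_p(F_p(x_p),F_p(x_{2p}))) for x ∈ ℝ^{2p}. If H is a distribution function on ℝ^{2p}, then for every swap map f ∈ F and every Borel A ⊆ ℝ^p, λ_H{x : f(x) ∈ A × ℝ^p} = P(X ∈ A). -/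
open MeasureTheory Set ENNReal Filter Topology


/-- An `n`-copula: the distribution function of a probability measure with
uniform-on-`(0,1)` univariate marginals. -/
def IsCopula {n : ℕ} (C : (Fin n → ℝ) → ℝ) : Prop :=
  ∃ μ : Measure (Fin n → ℝ), IsProbabilityMeasure μ ∧
    (∀ i, μ.map (fun y => y i) = volume.restrict (Set.Ioo (0:ℝ) 1)) ∧
    ∀ u, C u = (μ {y | ∀ i, y i ≤ u i}).toReal

/-- A `2`-copula, in curried form. -/
def IsCopula2 (D : ℝ → ℝ → ℝ) : Prop :=
  ∃ μ : Measure (ℝ × ℝ), IsProbabilityMeasure μ ∧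
    μ.map Prod.fst = volume.restrict (Set.Ioo (0:ℝ) 1) ∧
    μ.map Prod.snd = volume.restrict (Set.Ioo (0:ℝ) 1) ∧
    ∀ u v, D u v = (μ {y | y.1 ≤ u ∧ y.2 ≤ v}).toReal

lemma vol01_Iic (c : ℝ) :
    (volume.restrict (Set.Ioo (0:ℝ) 1)) (Iic c) = ENNReal.ofReal (min c 1) := by
  rw [Measure.restrict_apply measurableSet_Iic]
  rcases le_or_gt c 0 with h | h
  · have he : Iic c ∩ Ioo (0:ℝ) 1 = ∅ := by
      ext t
      simp only [mem_inter_iff, mem_Iic, mem_Ioo, mem_empty_iff_false, iff_false, not_and]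
      intro h1 h2; linarith
    rw [he, measure_empty, min_eq_left (h.trans zero_le_one),
      Eq.comm, ENNReal.ofReal_eq_zero]
    exact h
  rcases le_or_gt 1 c with h1 | h1
  · have he : Iic c ∩ Ioo (0:ℝ) 1 = Ioo 0 1 := by
      ext t
      simp only [mem_inter_iff, mem_Iic, mem_Ioo, and_iff_right_iff_imp]
      rintro ⟨h2, h3⟩; exact h3.le.trans h1
    rw [he, min_eq_right h1, Real.volume_Ioo]; norm_num
  · have he : Iic c ∩ Ioo (0:ℝ) 1 = Ioc 0 c := by
      ext t
      simp only [mem_inter_iff, mem_Iic, mem_Ioo, mem_Ioc]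
      constructor
      · rintro ⟨h2, h3, _⟩; exact ⟨h3, h2⟩
      · rintro ⟨h2, h3⟩; exact ⟨h3, h2, lt_of_le_of_lt h3 h1⟩
    rw [he, min_eq_left h1.le, Real.volume_Ioc]; norm_num

lemma vol01_Ici_one : (volume.restrict (Set.Ioo (0:ℝ) 1)) (Ici 1) = 0 := by
  rw [Measure.restrict_apply measurableSet_Ici]
  have : Ici (1:ℝ) ∩ Ioo 0 1 = ∅ := by
    ext t
    simp only [mem_inter_iff, mem_Ici, mem_Ioo, mem_empty_iff_false, iff_false, not_and]
    intro h1 h2 h3; linarith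
  rw [this, measure_empty]

lemma vol01_singleton (c : ℝ) : (volume.restrict (Set.Ioo (0:ℝ) 1)) {c} = 0 := by
  rw [Measure.restrict_apply (measurableSet_singleton c)]
  exact measure_mono_null inter_subset_left (Real.volume_singleton)

lemma copula2_set_meas (a b : ℝ) : MeasurableSet {y : ℝ × ℝ | y.1 ≤ a ∧ y.2 ≤ b} :=
  (measurable_fst measurableSet_Iic).inter (measurable_snd measurableSet_Iic)

lemma copula2_le_snd {D : ℝ → ℝ → ℝ} (hD : IsCopula2 D) (a b : ℝ) (hb : 0 ≤ b) :
    D a b ≤ b := by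
  obtain ⟨μ, hprob, hfst, hsnd, hrep⟩ := hD
  rw [hrep]
  have h1 : μ {y : ℝ × ℝ | y.1 ≤ a ∧ y.2 ≤ b} ≤ ENNReal.ofReal (min b 1) := by
    have : μ (Prod.snd ⁻¹' Iic b) = ENNReal.ofReal (min b 1) := by
      rw [← Measure.map_apply measurable_snd measurableSet_Iic, hsnd, vol01_Iic]
    calc μ {y : ℝ × ℝ | y.1 ≤ a ∧ y.2 ≤ b} ≤ μ (Prod.snd ⁻¹' Iic b) :=
          measure_mono fun y hy => hy.2
      _ = ENNReal.ofReal (min b 1) := this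
  calc (μ {y : ℝ × ℝ | y.1 ≤ a ∧ y.2 ≤ b}).toReal
      ≤ (ENNReal.ofReal (min b 1)).toReal := ENNReal.toReal_mono ofReal_ne_top h1
    _ = min b 1 := ENNReal.toReal_ofReal (le_min hb zero_le_one)
    _ ≤ b := min_le_left _ _

lemma copula2_le_fst {D : ℝ → ℝ → ℝ} (hD : IsCopula2 D) (a b : ℝ) (ha : 0 ≤ a) :
    D a b ≤ a := by
  obtain ⟨μ, hprob, hfst, hsnd, hrep⟩ := hD
  rw [hrep]
  have h1 : μ {y : ℝ × ℝ | y.1 ≤ a ∧ y.2 ≤ b} ≤ ENNReal.ofReal (min a 1) := by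
    have : μ (Prod.fst ⁻¹' Iic a) = ENNReal.ofReal (min a 1) := by
      rw [← Measure.map_apply measurable_fst measurableSet_Iic, hfst, vol01_Iic]
    calc μ {y : ℝ × ℝ | y.1 ≤ a ∧ y.2 ≤ b} ≤ μ (Prod.fst ⁻¹' Iic a) :=
          measure_mono fun y hy => hy.1
      _ = ENNReal.ofReal (min a 1) := this
  calc (μ {y : ℝ × ℝ | y.1 ≤ a ∧ y.2 ≤ b}).toReal
      ≤ (ENNReal.ofReal (min a 1)).toReal := ENNReal.toReal_mono ofReal_ne_top h1
    _ = min a 1 := ENNReal.toReal_ofReal (le_min ha zero_le_one)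
    _ ≤ a := min_le_left _ _

lemma copula2_mono {D : ℝ → ℝ → ℝ} (hD : IsCopula2 D) {a a' b b' : ℝ}
    (ha : a ≤ a') (hb : b ≤ b') : D a b ≤ D a' b' := by
  obtain ⟨μ, hprob, hfst, hsnd, hrep⟩ := hD
  rw [hrep, hrep]
  exact ENNReal.toReal_mono (measure_ne_top _ _)
    (measure_mono fun y hy => ⟨hy.1.trans ha, hy.2.trans hb⟩)

lemma copula2_tendsto_fst {D : ℝ → ℝ → ℝ} (hD : IsCopula2 D) (c : ℝ) (hc0 : 0 ≤ c)
    (hc1 : c ≤ 1) (a : ℕ → ℝ) (hmono : Monotone a) (ha : Tendsto a atTop (𝓝 1)) :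
    Tendsto (fun n => D (a n) c) atTop (𝓝 c) := by
  obtain ⟨μ, hprob, hfst, hsnd, hrep⟩ := hD
  set G : ℕ → Set (ℝ × ℝ) := fun n => {y : ℝ × ℝ | y.1 ≤ a n ∧ y.2 ≤ c} with hG
  have hGm : Monotone G := fun n m hnm y hy => ⟨hy.1.trans (hmono hnm), hy.2⟩
  have hup : μ {y : ℝ × ℝ | y.2 ≤ c} = ENNReal.ofReal c := by
    have : μ (Prod.snd ⁻¹' Iic c) = ENNReal.ofReal (min c 1) := by
      rw [← Measure.map_apply measurable_snd measurableSet_Iic, hsnd, vol01_Iic]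
    rw [show {y : ℝ × ℝ | y.2 ≤ c} = Prod.snd ⁻¹' Iic c from rfl, this, min_eq_left hc1]
  have hzero : μ {y : ℝ × ℝ | 1 ≤ y.1} = 0 := by
    have : μ (Prod.fst ⁻¹' Ici 1) = 0 := by
      rw [← Measure.map_apply measurable_fst measurableSet_Ici, hfst, vol01_Ici_one]
    exact this
  have hU : μ (⋃ n, G n) = ENNReal.ofReal c := by
    refine le_antisymm ?_ ?_
    · refine (measure_mono ?_).trans_eq hup
      rintro y ⟨_, ⟨n, rfl⟩, hy⟩; exact hy.2
    · have hsub : {y : ℝ × ℝ | y.2 ≤ c} ⊆ (⋃ n, G n) ∪ {y : ℝ × ℝ | 1 ≤ y.1} := by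
        intro y hy
        by_cases h : y.1 < 1
        · left
          have hev : ∀ᶠ n in atTop, y.1 < a n := ha.eventually (eventually_gt_nhds h)
          obtain ⟨n, hn⟩ := hev.exists
          exact mem_iUnion.2 ⟨n, hn.le, hy⟩
        · right; exact not_lt.1 h
      calc ENNReal.ofReal c = μ {y : ℝ × ℝ | y.2 ≤ c} := hup.symm
        _ ≤ μ ((⋃ n, G n) ∪ {y : ℝ × ℝ | 1 ≤ y.1}) := measure_mono hsub
        _ ≤ μ (⋃ n, G n) + μ {y : ℝ × ℝ | 1 ≤ y.1} := measure_union_le _ _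
        _ = μ (⋃ n, G n) := by rw [hzero, add_zero]
  have ht := tendsto_measure_iUnion_atTop (μ := μ) hGm
  rw [hU] at ht
  have ht2 := (ENNReal.tendsto_toReal (ne_of_lt ofReal_lt_top)).comp ht
  rw [ENNReal.toReal_ofReal hc0] at ht2
  refine ht2.congr fun n => ?_
  simp only [Function.comp_apply, hG]
  exact (hrep _ _).symm

lemma copula2_tendsto_snd {D : ℝ → ℝ → ℝ} (hD : IsCopula2 D) (c : ℝ) (hc0 : 0 ≤ c)
    (hc1 : c ≤ 1) (a : ℕ → ℝ) (hmono : Monotone a) (ha : Tendsto a atTop (𝓝 1)) :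
    Tendsto (fun n => D c (a n)) atTop (𝓝 c) := by
  obtain ⟨μ, hprob, hfst, hsnd, hrep⟩ := hD
  set G : ℕ → Set (ℝ × ℝ) := fun n => {y : ℝ × ℝ | y.1 ≤ c ∧ y.2 ≤ a n} with hG
  have hGm : Monotone G := fun n m hnm y hy => ⟨hy.1, hy.2.trans (hmono hnm)⟩
  have hup : μ {y : ℝ × ℝ | y.1 ≤ c} = ENNReal.ofReal c := by
    have : μ (Prod.fst ⁻¹' Iic c) = ENNReal.ofReal (min c 1) := by
      rw [← Measure.map_apply measurable_fst measurableSet_Iic, hfst, vol01_Iic]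
    rw [show {y : ℝ × ℝ | y.1 ≤ c} = Prod.fst ⁻¹' Iic c from rfl, this, min_eq_left hc1]
  have hzero : μ {y : ℝ × ℝ | 1 ≤ y.2} = 0 := by
    have : μ (Prod.snd ⁻¹' Ici 1) = 0 := by
      rw [← Measure.map_apply measurable_snd measurableSet_Ici, hsnd, vol01_Ici_one]
    exact this
  have hU : μ (⋃ n, G n) = ENNReal.ofReal c := by
    refine le_antisymm ?_ ?_
    · refine (measure_mono ?_).trans_eq hup
      rintro y ⟨_, ⟨n, rfl⟩, hy⟩; exact hy.1
    · have hsub : {y : ℝ × ℝ | y.1 ≤ c} ⊆ (⋃ n, G n) ∪ {y : ℝ × ℝ | 1 ≤ y.2} := by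
        intro y hy
        by_cases h : y.2 < 1
        · left
          have hev : ∀ᶠ n in atTop, y.2 < a n := ha.eventually (eventually_gt_nhds h)
          obtain ⟨n, hn⟩ := hev.exists
          exact mem_iUnion.2 ⟨n, hy, hn.le⟩
        · right; exact not_lt.1 h
      calc ENNReal.ofReal c = μ {y : ℝ × ℝ | y.1 ≤ c} := hup.symm
        _ ≤ μ ((⋃ n, G n) ∪ {y : ℝ × ℝ | 1 ≤ y.2}) := measure_mono hsub
        _ ≤ μ (⋃ n, G n) + μ {y : ℝ × ℝ | 1 ≤ y.2} := measure_union_le _ _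
        _ = μ (⋃ n, G n) := by rw [hzero, add_zero]
  have ht := tendsto_measure_iUnion_atTop (μ := μ) hGm
  rw [hU] at ht
  have ht2 := (ENNReal.tendsto_toReal (ne_of_lt ofReal_lt_top)).comp ht
  rw [ENNReal.toReal_ofReal hc0] at ht2
  refine ht2.congr fun n => ?_
  simp only [Function.comp_apply, hG]
  exact (hrep _ _).symm

lemma key_box (p : ℕ) (hp : 2 ≤ p) (μX : Measure (Fin p → ℝ)) [IsProbabilityMeasure μX]
    (F : Fin p → ℝ → ℝ) (hF : ∀ i t, F i t = (μX {x | x i ≤ t}).toReal)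
    (C : (Fin p → ℝ) → ℝ) (hC : IsCopula C)
    (hSklar : ∀ x : Fin p → ℝ, (μX {y | ∀ i, y i ≤ x i}).toReal = C (fun i => F i (x i)))
    (D : Fin p → ℝ → ℝ → ℝ) (hD : ∀ i, IsCopula2 (D i))
    (H : ((Fin p → ℝ) × (Fin p → ℝ)) → ℝ)
    (hH : ∀ z, H z = C (fun i => D i (F i (z.1 i)) (F i (z.2 i))))
    (lamH : Measure ((Fin p → ℝ) × (Fin p → ℝ))) [IsProbabilityMeasure lamH]
    (hCDF : ∀ z, H z = (lamH {w | (∀ i, w.1 i ≤ z.1 i) ∧ (∀ i, w.2 i ≤ z.2 i)}).toReal)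
    (S : Finset (Fin p)) (x : Fin p → ℝ) :
    lamH {z : (Fin p → ℝ) × (Fin p → ℝ) | ∀ i, (if i ∈ S then z.2 i else z.1 i) ≤ x i}
      = μX {y | ∀ i, y i ≤ x i} := by
  have hne : Nonempty (Fin p) := ⟨⟨0, by omega⟩⟩
  -- facts about F
  have hFnn : ∀ i t, 0 ≤ F i t := fun i t => (hF i t) ▸ ENNReal.toReal_nonneg
  have hFle1 : ∀ i t, F i t ≤ 1 := by
    intro i t
    rw [hF]
    calc (μX {x | x i ≤ t}).toReal ≤ (μX univ).toReal :=
          ENNReal.toReal_mono (measure_ne_top _ _) (measure_mono (subset_univ _))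
      _ = 1 := by rw [measure_univ, ENNReal.toReal_one]
  have hFmono : ∀ i, Monotone (F i) := by
    intro i s t hst
    rw [hF, hF]
    exact ENNReal.toReal_mono (measure_ne_top _ _)
      (measure_mono fun y hy => le_trans hy hst)
  have hFmonoN : ∀ i, Monotone fun n : ℕ => F i (n : ℝ) :=
    fun i a b h => hFmono i (Nat.cast_le.2 h)
  have hFtend : ∀ i, Tendsto (fun n : ℕ => F i (n : ℝ)) atTop (𝓝 1) := by
    intro i
    have hmono : Monotone fun n : ℕ => {x : Fin p → ℝ | x i ≤ (n : ℝ)} := by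
      intro n m hnm y hy
      simp only [mem_setOf_eq] at hy ⊢
      exact le_trans hy (Nat.cast_le.2 hnm)
    have hU : (⋃ n : ℕ, {x : Fin p → ℝ | x i ≤ (n : ℝ)}) = univ := by
      ext y
      simp only [mem_iUnion, mem_setOf_eq, mem_univ, iff_true]
      exact exists_nat_ge (y i)
    have ht := tendsto_measure_iUnion_atTop (μ := μX) hmono
    rw [hU, measure_univ] at ht
    have ht2 := (ENNReal.tendsto_toReal one_ne_top).comp ht
    rw [ENNReal.toReal_one] at ht2
    refine ht2.congr fun n => ?_
    simp only [Function.comp_apply]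
    exact (hF i n).symm
  set c : Fin p → ℝ := fun i => F i (x i) with hc
  set v : ℕ → Fin p → ℝ :=
    fun n i => if i ∈ S then D i (F i (n : ℝ)) (c i) else D i (c i) (F i (n : ℝ)) with hv
  have hvmono : ∀ i, Monotone (fun n => v n i) := by
    intro i n m hnm
    by_cases h : i ∈ S <;> simp only [hv, h, if_pos, if_neg, if_true, if_false]
    · exact copula2_mono (hD i) (hFmonoN i hnm) le_rfl
    · exact copula2_mono (hD i) le_rfl (hFmonoN i hnm)
  have hvle : ∀ n i, v n i ≤ c i := by
    intro n i
    by_cases h : i ∈ S <;> simp only [hv, h, if_pos, if_neg, if_true, if_false]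
    · exact copula2_le_snd (hD i) _ _ (hFnn i (x i))
    · exact copula2_le_fst (hD i) _ _ (hFnn i (x i))
  have hvtend : ∀ i, Tendsto (fun n => v n i) atTop (𝓝 (c i)) := by
    intro i
    by_cases h : i ∈ S <;> simp only [hv, h, if_pos, if_neg, if_true, if_false]
    · exact copula2_tendsto_fst (hD i) (c i) (hFnn i (x i)) (hFle1 i (x i)) _
        (hFmonoN i) (hFtend i)
    · exact copula2_tendsto_snd (hD i) (c i) (hFnn i (x i)) (hFle1 i (x i)) _
        (hFmonoN i) (hFtend i)
  obtain ⟨μC, hμCprob, hμCmarg, hμCrep⟩ := hC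
  -- tendsto of C (v n)
  have hvCtend : Tendsto (fun n => C (v n)) atTop (𝓝 (C c)) := by
    set E : ℕ → Set (Fin p → ℝ) := fun n => {y | ∀ i, y i ≤ v n i} with hE
    have hEmono : Monotone E := fun n m h y hy i => (hy i).trans (hvmono i h)
    have hEU : μC (⋃ n, E n) = μC {y | ∀ i, y i ≤ c i} := by
      refine le_antisymm (measure_mono ?_) ?_
      · rintro y ⟨_, ⟨n, rfl⟩, hy⟩ i
        exact (hy i).trans (hvle n i)
      · set N : Set (Fin p → ℝ) := ⋃ i, {y : Fin p → ℝ | y i = c i} with hN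
        have hN0 : μC N = 0 := by
          refine measure_iUnion_null fun i => ?_
          have : {y : Fin p → ℝ | y i = c i} = (fun y => y i) ⁻¹' {c i} := rfl
          rw [this, ← Measure.map_apply (measurable_pi_apply i)
            (measurableSet_singleton _), hμCmarg, vol01_singleton]
        have hsub : {y : Fin p → ℝ | ∀ i, y i ≤ c i} ⊆ (⋃ n, E n) ∪ N := by
          intro y hy
          by_cases h : ∃ i, y i = c i
          · obtain ⟨i, hi⟩ := h
            exact Or.inr (mem_iUnion.2 ⟨i, hi⟩)
          · push_neg at h
            left
            have hlt : ∀ i, y i < c i := fun i => lt_of_le_of_ne (hy i) (h i)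
            have hev : ∀ᶠ n in atTop, ∀ i, y i < v n i :=
              eventually_all.2 fun i => (hvtend i).eventually (eventually_gt_nhds (hlt i))
            obtain ⟨n, hn⟩ := hev.exists
            exact mem_iUnion.2 ⟨n, fun i => (hn i).le⟩
        calc μC {y : Fin p → ℝ | ∀ i, y i ≤ c i} ≤ μC ((⋃ n, E n) ∪ N) :=
              measure_mono hsub
          _ ≤ μC (⋃ n, E n) + μC N := measure_union_le _ _
          _ = μC (⋃ n, E n) := by rw [hN0, add_zero]
    have ht := tendsto_measure_iUnion_atTop (μ := μC) hEmono
    rw [hEU] at ht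
    have ht2 := (ENNReal.tendsto_toReal (measure_ne_top μC _)).comp ht
    rw [← hμCrep c] at ht2
    refine ht2.congr fun n => ?_
    simp only [Function.comp_apply, hE]
    exact (hμCrep (v n)).symm
  -- lamH side
  set a : ℕ → Fin p → ℝ := fun n i => if i ∈ S then (n : ℝ) else x i with ha
  set b : ℕ → Fin p → ℝ := fun n i => if i ∈ S then x i else (n : ℝ) with hb
  set Box : ℕ → Set ((Fin p → ℝ) × (Fin p → ℝ)) :=
    fun n => {w | (∀ i, w.1 i ≤ a n i) ∧ (∀ i, w.2 i ≤ b n i)} with hBox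
  have hBoxmono : Monotone Box := by
    intro n m hnm w hw
    refine ⟨fun i => (hw.1 i).trans ?_, fun i => (hw.2 i).trans ?_⟩ <;>
      by_cases h : i ∈ S <;> simp only [ha, hb, h, if_pos, if_neg, if_true, if_false, le_refl]
    · exact Nat.cast_le.2 hnm
    · exact Nat.cast_le.2 hnm
  have hBoxU : (⋃ n, Box n) =
      {z : (Fin p → ℝ) × (Fin p → ℝ) | ∀ i, (if i ∈ S then z.2 i else z.1 i) ≤ x i} := by
    ext z
    constructor
    · rintro ⟨_, ⟨n, rfl⟩, hz1, hz2⟩ i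
      by_cases h : i ∈ S
      · have := hz2 i; simpa [hb, h] using this
      · have := hz1 i; simpa [ha, h] using this
    · intro hz
      obtain ⟨n, hn⟩ := exists_nat_ge
        (Finset.univ.sup' (Finset.univ_nonempty) fun i => max (z.1 i) (z.2 i))
      refine mem_iUnion.2 ⟨n, fun i => ?_, fun i => ?_⟩
      · by_cases h : i ∈ S
        · simp only [ha, h, if_true]
          exact le_trans (le_trans (le_max_left _ _)
            (Finset.le_sup' (f := fun i => max (z.1 i) (z.2 i)) (Finset.mem_univ i))) hn
        · simpa [ha, h] using hz i
      · by_cases h : i ∈ S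
        · simpa [hb, h] using hz i
        · simp only [hb, h, if_false]
          exact le_trans (le_trans (le_max_right _ _)
            (Finset.le_sup' (f := fun i => max (z.1 i) (z.2 i)) (Finset.mem_univ i))) hn
  have hBoxCDF : ∀ n, (lamH (Box n)).toReal = C (v n) := by
    intro n
    have h1 := hCDF (a n, b n)
    have h2 := hH (a n, b n)
    have h3 : (fun i => D i (F i (a n i)) (F i (b n i))) = v n := by
      funext i
      by_cases h : i ∈ S <;> simp [ha, hb, hv, hc, h]
    rw [h2, h3] at h1
    exact h1.symm
  have ht := tendsto_measure_iUnion_atTop (μ := lamH) hBoxmono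
  rw [hBoxU] at ht
  have ht2 := (ENNReal.tendsto_toReal (measure_ne_top lamH _)).comp ht
  have ht3 : Tendsto (fun n => C (v n)) atTop
      (𝓝 (lamH {z : (Fin p → ℝ) × (Fin p → ℝ) |
        ∀ i, (if i ∈ S then z.2 i else z.1 i) ≤ x i}).toReal) := by
    refine ht2.congr fun n => ?_
    simp only [Function.comp_apply]
    exact hBoxCDF n
  have hkey : (lamH {z : (Fin p → ℝ) × (Fin p → ℝ) |
      ∀ i, (if i ∈ S then z.2 i else z.1 i) ≤ x i}).toReal
      = (μX {y | ∀ i, y i ≤ x i}).toReal := by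
    rw [hSklar x]
    exact tendsto_nhds_unique ht3 hvCtend
  exact (ENNReal.toReal_eq_toReal_iff' (measure_ne_top _ _) (measure_ne_top _ _)).1 hkey

/-- If `H(x) = C(D₁(F₁(x₁),F₁(x_{p+1})),…,D_p(F_p(x_p),F_p(x_{2p})))` is a distribution
function on `ℝ^{2p}`, then `λ_H {x : f(x) ∈ A × ℝ^p} = P(X ∈ A)` for every swap map
`f ∈ F` and Borel `A`. -/
theorem copula_knockoff_marginals (p : ℕ) (hp : 2 ≤ p)
    (μX : Measure (Fin p → ℝ)) [IsProbabilityMeasure μX]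
    (F : Fin p → ℝ → ℝ) (hF : ∀ i t, F i t = (μX {x | x i ≤ t}).toReal)
    (C : (Fin p → ℝ) → ℝ) (hC : IsCopula C)
    (hSklar : ∀ x : Fin p → ℝ, (μX {y | ∀ i, y i ≤ x i}).toReal = C (fun i => F i (x i)))
    (D : Fin p → ℝ → ℝ → ℝ) (hD : ∀ i, IsCopula2 (D i))
    (H : ((Fin p → ℝ) × (Fin p → ℝ)) → ℝ)
    (hH : ∀ z, H z = C (fun i => D i (F i (z.1 i)) (F i (z.2 i))))
    (lamH : Measure ((Fin p → ℝ) × (Fin p → ℝ))) [IsProbabilityMeasure lamH]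
    (hCDF : ∀ z, H z =
      (lamH {w | (∀ i, w.1 i ≤ z.1 i) ∧ (∀ i, w.2 i ≤ z.2 i)}).toReal) :
    ∀ S : Finset (Fin p), ∀ A : Set (Fin p → ℝ), MeasurableSet A →
      lamH {z | (swapMap p S z).1 ∈ A} = μX A := by
  intro S A hA
  have hg : Measurable fun z : (Fin p → ℝ) × (Fin p → ℝ) => (swapMap p S z).1 := by
    apply measurable_pi_lambda
    intro i
    by_cases h : i ∈ S
    · simp only [swapMap, h, if_true]
      exact (measurable_pi_apply i).comp measurable_snd
    · simp only [swapMap, h, if_false]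
      exact (measurable_pi_apply i).comp measurable_fst
  set ν := lamH.map (fun z : (Fin p → ℝ) × (Fin p → ℝ) => (swapMap p S z).1) with hν
  have hνprob : IsProbabilityMeasure ν := Measure.isProbabilityMeasure_map hg.aemeasurable
  have hext : ν = μX := by
    have hgen : (inferInstance : MeasurableSpace (Fin p → ℝ)) =
        MeasurableSpace.generateFrom
          (pi univ '' pi univ fun _ : Fin p => range (Iic : ℝ → Set ℝ)) := by
      refine (generateFrom_eq_pi (fun _ => ?_) (fun _ => ?_)).symm
      · rw [BorelSpace.measurable_eq (α := ℝ)]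
        exact (borel_eq_generateFrom_Iic ℝ).symm
      · exact ⟨fun n => Iic (n : ℝ), fun n => mem_range_self _, by
          ext t
          simp only [mem_iUnion, mem_Iic, mem_univ, iff_true]
          exact exists_nat_ge t⟩
    refine ext_of_generate_finite _ hgen ?_ ?_ (by simp)
    · rintro _ ⟨t1, ht1, rfl⟩ _ ⟨t2, ht2, rfl⟩ _
      choose x1 hx1 using fun i => ht1 i (mem_univ i)
      choose x2 hx2 using fun i => ht2 i (mem_univ i)
      refine ⟨fun i => Iic (min (x1 i) (x2 i)), fun i _ => mem_range_self _, ?_⟩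
      rw [← pi_inter_distrib]
      refine pi_congr rfl fun i _ => ?_
      rw [← hx1 i, ← hx2 i, Iic_inter_Iic]
    · rintro _ ⟨t, ht, rfl⟩
      choose y hy using fun i => ht i (mem_univ i)
      have hteq : t = fun i => Iic (y i) := funext fun i => (hy i).symm
      have hmeas : MeasurableSet (univ.pi t) := by
        rw [hteq]
        exact MeasurableSet.univ_pi fun i => measurableSet_Iic
      rw [hν, Measure.map_apply hg hmeas]
      have hpre : (fun z : (Fin p → ℝ) × (Fin p → ℝ) => (swapMap p S z).1) ⁻¹' univ.pi t
          = {z : (Fin p → ℝ) × (Fin p → ℝ) |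
              ∀ i, (if i ∈ S then z.2 i else z.1 i) ≤ y i} := by
        ext z
        simp only [mem_preimage, hteq, Set.mem_univ_pi, mem_Iic, mem_setOf_eq, swapMap]
      rw [hpre, key_box p hp μX F hF C hC hSklar D hD H hH lamH hCDF S y]
      congr 1
      ext w
      simp only [mem_setOf_eq, hteq, Set.mem_univ_pi, mem_Iic]
  have : {z : (Fin p → ℝ) × (Fin p → ℝ) | (swapMap p S z).1 ∈ A}
      = (fun z : (Fin p → ℝ) × (Fin p → ℝ) => (swapMap p S z).1) ⁻¹' A := rfl
  rw [this, ← Measure.map_apply hg hA, ← hν, hext]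
end

section
/- In the setting of the copula construction H(x) = C(D₁(F₁(x₁),F₁(x_{p+1})),...,D_p(F_p(x_p),F_p(x_{2p}))): if H is a distribution function and each 2-copula D_i is symmetric (D_i(u,v) = D_i(v,u)), then H(f(x)) = H(x) for all swap maps f ∈ F and x ∈ ℝ^{2p}, hence λ_H is F-invariant and λ_H ∈ Λ. -/
open MeasureTheory Set ENNReal

namespace KnockoffAux

variable {ι : Type*} [Fintype ι]

/-- The lower box `{y | ∀ i, y i ≤ x i}`. -/
def box (x : ι → ℝ) : Set (ι → ℝ) := {y | ∀ i, y i ≤ x i}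

lemma measurableSet_box (x : ι → ℝ) : MeasurableSet (box x) := by
  have : box x = ⋂ i, {y : ι → ℝ | y i ≤ x i} := by
    ext y; simp [box, Set.mem_iInter]
  rw [this]
  exact MeasurableSet.iInter fun i => measurable_pi_apply i measurableSet_Iic

lemma exists_nat_forall_le (y : ι → ℝ) : ∃ n : ℕ, ∀ j, y j ≤ (n : ℝ) := by
  refine ⟨Finset.univ.sup fun j => ⌈y j⌉₊, fun j => ?_⟩
  exact (Nat.le_ceil _).trans
    (Nat.cast_le.2 (Finset.le_sup (f := fun j => ⌈y j⌉₊) (Finset.mem_univ j)))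

lemma pi_eq_generateFrom_box :
    (MeasurableSpace.pi : MeasurableSpace (ι → ℝ)) =
      .generateFrom (Set.range (box (ι := ι))) := by
  classical
  refine le_antisymm ?_ (MeasurableSpace.generateFrom_le ?_)
  · refine iSup_le fun i => ?_
    have : (Real.measurableSpace : MeasurableSpace ℝ) =
        .generateFrom (Set.range Set.Iic) := by
      rw [Real.measurableSpace.eq_1, borel_eq_generateFrom_Iic ℝ]
    rw [show ((fun _ => Real.measurableSpace : ι → MeasurableSpace ℝ) i) =
      Real.measurableSpace from rfl, this, MeasurableSpace.comap_generateFrom]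
    refine MeasurableSpace.generateFrom_le ?_
    rintro _ ⟨_, ⟨a, rfl⟩, rfl⟩
    have heq : (fun y : ι → ℝ => y i) ⁻¹' Set.Iic a =
        ⋃ n : ℕ, box (fun j => if j = i then a else (n : ℝ)) := by
      ext y
      simp only [Set.mem_preimage, Set.mem_Iic, Set.mem_iUnion, box, Set.mem_setOf_eq]
      constructor
      · intro hy
        obtain ⟨n, hn⟩ := exists_nat_forall_le y
        exact ⟨n, fun j => by by_cases h : j = i <;> simp [h, hy, hn j]⟩
      · rintro ⟨n, hn⟩
        simpa using hn i
    rw [heq]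
    exact MeasurableSet.iUnion fun n =>
      MeasurableSpace.measurableSet_generateFrom ⟨_, rfl⟩
  · rintro _ ⟨x, rfl⟩
    exact measurableSet_box x

lemma isPiSystem_box : IsPiSystem (Set.range (box (ι := ι))) := by
  rintro _ ⟨x, rfl⟩ _ ⟨x', rfl⟩ -
  refine ⟨x ⊓ x', ?_⟩
  ext y
  simp [box, forall_and, Set.mem_inter_iff, le_inf_iff]

lemma ext_of_box (μ ν : Measure (ι → ℝ)) [IsProbabilityMeasure μ] [IsProbabilityMeasure ν]
    (h : ∀ x, μ (box x) = ν (box x)) : μ = ν := by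
  refine ext_of_generate_finite _ pi_eq_generateFrom_box isPiSystem_box ?_ (by simp)
  rintro _ ⟨x, rfl⟩; exact h x

end KnockoffAux
namespace KnockoffAux

variable {ι : Type*} [Fintype ι]

/-- A product lower box on `(ι → ℝ) × (ι → ℝ)`. -/
def pbox (a b : ι → ℝ) : Set ((ι → ℝ) × (ι → ℝ)) :=
  {w | (∀ i, w.1 i ≤ a i) ∧ (∀ i, w.2 i ≤ b i)}

lemma pbox_eq (a b : ι → ℝ) : pbox a b = Prod.fst ⁻¹' box a ∩ Prod.snd ⁻¹' box b := rfl

lemma measurableSet_pbox (a b : ι → ℝ) : MeasurableSet (pbox a b) := by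
  rw [pbox_eq]
  exact ((measurableSet_box a).preimage measurable_fst).inter
    ((measurableSet_box b).preimage measurable_snd)

lemma prod_eq_generateFrom_pbox :
    (Prod.instMeasurableSpace : MeasurableSpace ((ι → ℝ) × (ι → ℝ))) =
      .generateFrom {s | ∃ a b, s = pbox a b} := by
  refine le_antisymm (sup_le ?_ ?_) (MeasurableSpace.generateFrom_le ?_)
  · rw [show (MeasurableSpace.pi : MeasurableSpace (ι → ℝ)) =
      .generateFrom (Set.range (box (ι := ι))) from pi_eq_generateFrom_box,
      MeasurableSpace.comap_generateFrom]
    refine MeasurableSpace.generateFrom_le ?_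
    rintro _ ⟨_, ⟨a, rfl⟩, rfl⟩
    have heq : (Prod.fst : (ι → ℝ) × (ι → ℝ) → ι → ℝ) ⁻¹' box a =
        ⋃ n : ℕ, pbox a (fun _ => (n : ℝ)) := by
      ext w
      simp only [Set.mem_preimage, box, Set.mem_setOf_eq, Set.mem_iUnion, pbox]
      constructor
      · intro hw
        obtain ⟨n, hn⟩ := exists_nat_forall_le w.2
        exact ⟨n, hw, hn⟩
      · rintro ⟨n, hn, -⟩; exact hn
    rw [heq]
    exact MeasurableSet.iUnion fun n =>
      MeasurableSpace.measurableSet_generateFrom ⟨a, _, rfl⟩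
  · rw [show (MeasurableSpace.pi : MeasurableSpace (ι → ℝ)) =
      .generateFrom (Set.range (box (ι := ι))) from pi_eq_generateFrom_box,
      MeasurableSpace.comap_generateFrom]
    refine MeasurableSpace.generateFrom_le ?_
    rintro _ ⟨_, ⟨b, rfl⟩, rfl⟩
    have heq : (Prod.snd : (ι → ℝ) × (ι → ℝ) → ι → ℝ) ⁻¹' box b =
        ⋃ n : ℕ, pbox (fun _ => (n : ℝ)) b := by
      ext w
      simp only [Set.mem_preimage, box, Set.mem_setOf_eq, Set.mem_iUnion, pbox]
      constructor
      · intro hw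
        obtain ⟨n, hn⟩ := exists_nat_forall_le w.1
        exact ⟨n, hn, hw⟩
      · rintro ⟨n, -, hn⟩; exact hn
    rw [heq]
    exact MeasurableSet.iUnion fun n =>
      MeasurableSpace.measurableSet_generateFrom ⟨_, b, rfl⟩
  · rintro _ ⟨a, b, rfl⟩
    exact measurableSet_pbox a b

lemma isPiSystem_pbox : IsPiSystem {s : Set ((ι → ℝ) × (ι → ℝ)) | ∃ a b, s = pbox a b} := by
  rintro _ ⟨a, b, rfl⟩ _ ⟨a', b', rfl⟩ -
  refine ⟨a ⊓ a', b ⊓ b', ?_⟩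
  ext w
  simp only [Set.mem_inter_iff, pbox, Set.mem_setOf_eq, Pi.inf_apply, le_inf_iff,
    forall_and]
  tauto

lemma ext_of_pbox (μ ν : Measure ((ι → ℝ) × (ι → ℝ)))
    [IsProbabilityMeasure μ] [IsProbabilityMeasure ν]
    (h : ∀ a b, μ (pbox a b) = ν (pbox a b)) : μ = ν := by
  refine ext_of_generate_finite _ prod_eq_generateFrom_pbox isPiSystem_pbox ?_ (by simp)
  rintro _ ⟨a, b, rfl⟩; exact h a b

end KnockoffAux
namespace KnockoffAux

variable {ι : Type*} [Fintype ι]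

lemma measure_eq_of_between {α : Type*} [MeasurableSpace α] (μ : Measure α)
    {s t u : Set α} (h1 : s ⊆ t) (h2 : t ⊆ s ∪ u) (hu : μ u = 0) : μ t = μ s := by
  refine le_antisymm ((measure_mono h2).trans ?_) (measure_mono h1)
  calc μ (s ∪ u) ≤ μ s + μ u := measure_union_le _ _
  _ = μ s := by rw [hu, add_zero]

lemma halfplane_fst (μ : Measure (ℝ × ℝ))
    (h : μ.map Prod.fst = volume.restrict (Set.Ioo (0:ℝ) 1))
    {u : ℝ} (h0 : 0 ≤ u) (h1 : u ≤ 1) : μ {y | y.1 ≤ u} = ENNReal.ofReal u := by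
  have : {y : ℝ × ℝ | y.1 ≤ u} = Prod.fst ⁻¹' Set.Iic u := rfl
  rw [this, ← Measure.map_apply measurable_fst measurableSet_Iic, h,
    Measure.restrict_apply measurableSet_Iic]
  rcases eq_or_lt_of_le h1 with rfl | h1
  · have hIic : Set.Iic (1:ℝ) ∩ Set.Ioo 0 1 = Set.Ioo 0 1 :=
      Set.inter_eq_right.2 fun y (hy : y ∈ Set.Ioo (0:ℝ) 1) => le_of_lt hy.2
    rw [hIic]
    simp [Real.volume_Ioo]
  · have : Set.Iic u ∩ Set.Ioo (0:ℝ) 1 = Set.Ioc 0 u := by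
      ext y
      simp only [Set.mem_inter_iff, Set.mem_Iic, Set.mem_Ioo, Set.mem_Ioc]
      exact ⟨fun ⟨hy, hy0, _⟩ => ⟨hy0, hy⟩, fun ⟨hy0, hy⟩ => ⟨hy, hy0, lt_of_le_of_lt hy h1⟩⟩
    rw [this, Real.volume_Ioc, sub_zero]

lemma null_snd_ge_one (μ : Measure (ℝ × ℝ))
    (h : μ.map Prod.snd = volume.restrict (Set.Ioo (0:ℝ) 1)) :
    μ {y | 1 ≤ y.2} = 0 := by
  have : {y : ℝ × ℝ | 1 ≤ y.2} = Prod.snd ⁻¹' Set.Ici 1 := rfl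
  rw [this, ← Measure.map_apply measurable_snd measurableSet_Ici, h,
    Measure.restrict_apply measurableSet_Ici]
  have : Set.Ici (1:ℝ) ∩ Set.Ioo 0 1 = ∅ := by
    ext y
    simp only [Set.mem_inter_iff, Set.mem_Ici, Set.mem_Ioo, Set.mem_empty_iff_false, iff_false]
    rintro ⟨h1, -, h2⟩; exact absurd (lt_of_le_of_lt h1 h2) (lt_irrefl _)
  rw [this, measure_empty]

lemma null_eval_eq (μ : Measure (ι → ℝ)) (i : ι)
    (h : μ.map (fun y => y i) = volume.restrict (Set.Ioo (0:ℝ) 1)) (c : ℝ) :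
    μ {y | y i = c} = 0 := by
  have : {y : ι → ℝ | y i = c} = (fun y : ι → ℝ => y i) ⁻¹' {c} := rfl
  rw [this, ← Measure.map_apply (measurable_pi_apply i) (measurableSet_singleton c), h,
    Measure.restrict_apply (measurableSet_singleton c)]
  exact measure_mono_null Set.inter_subset_left (Real.volume_singleton)

end KnockoffAux
namespace KnockoffAux

open Filter Topology

variable {ι : Type*} [Fintype ι]

lemma copula2_snd_tendsto {D : ℝ → ℝ → ℝ}
    (μ : Measure (ℝ × ℝ)) [IsProbabilityMeasure μ]
    (hfst : μ.map Prod.fst = volume.restrict (Set.Ioo (0:ℝ) 1))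
    (hsnd : μ.map Prod.snd = volume.restrict (Set.Ioo (0:ℝ) 1))
    (hform : ∀ u v, D u v = (μ {y | y.1 ≤ u ∧ y.2 ≤ v}).toReal)
    {u : ℝ} (h0 : 0 ≤ u) (h1 : u ≤ 1) {v : ℕ → ℝ} (hv : Monotone v)
    (hvt : Filter.Tendsto v Filter.atTop (nhds 1)) :
    Monotone (fun n => D u (v n)) ∧
      Filter.Tendsto (fun n => D u (v n)) Filter.atTop (nhds u) := by
  set E : ℕ → Set (ℝ × ℝ) := fun n => {y | y.1 ≤ u ∧ y.2 ≤ v n} with hE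
  have hmonoE : Monotone E := fun m n hmn y hy => ⟨hy.1, hy.2.trans (hv hmn)⟩
  have hDform : (fun n => D u (v n)) = fun n => (μ (E n)).toReal := by
    funext n; exact hform u (v n)
  have hmonoD : Monotone fun n => D u (v n) := by
    rw [hDform]
    exact fun m n hmn =>
      ENNReal.toReal_mono (measure_ne_top μ _) (measure_mono (hmonoE hmn))
  refine ⟨hmonoD, ?_⟩
  have htend : Filter.Tendsto (fun n => μ (E n)) Filter.atTop (nhds (μ (⋃ n, E n))) :=
    tendsto_measure_iUnion_atTop hmonoE
  have hunion : μ (⋃ n, E n) = ENNReal.ofReal u := by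
    have h1' : (⋃ n, E n) ⊆ {y : ℝ × ℝ | y.1 ≤ u} :=
      Set.iUnion_subset fun n y hy => hy.1
    have h2' : {y : ℝ × ℝ | y.1 ≤ u} ⊆ (⋃ n, E n) ∪ {y : ℝ × ℝ | 1 ≤ y.2} := by
      intro y hy
      by_cases hy2 : y.2 < 1
      · obtain ⟨n, hn⟩ := (hvt.eventually (lt_mem_nhds hy2)).exists
        exact Or.inl (Set.mem_iUnion.2 ⟨n, hy, le_of_lt hn⟩)
      · exact Or.inr (not_lt.1 hy2)
    rw [← measure_eq_of_between μ h1' h2' (null_snd_ge_one μ hsnd)]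
    exact halfplane_fst μ hfst h0 h1
  rw [hDform]
  have := (ENNReal.tendsto_toReal (by rw [hunion]; exact ENNReal.ofReal_ne_top)).comp htend
  rw [hunion, ENNReal.toReal_ofReal h0] at this
  exact this

lemma copula_measure_tendsto (μC : Measure (ι → ℝ)) [IsProbabilityMeasure μC]
    (hmar : ∀ i, μC.map (fun y => y i) = volume.restrict (Set.Ioo (0:ℝ) 1))
    {w : ℕ → ι → ℝ} {u : ι → ℝ} (hmono : ∀ i, Monotone fun n => w n i)
    (ht : ∀ i, Filter.Tendsto (fun n => w n i) Filter.atTop (nhds (u i))) :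
    Filter.Tendsto (fun n => (μC (box (w n))).toReal) Filter.atTop
      (nhds ((μC (box u)).toReal)) := by
  classical
  set G : ℕ → Set (ι → ℝ) := fun n => box (w n) with hG
  have hmonoG : Monotone G := fun m n hmn y hy i => (hy i).trans (hmono i hmn)
  have htend : Filter.Tendsto (fun n => μC (G n)) Filter.atTop (nhds (μC (⋃ n, G n))) :=
    tendsto_measure_iUnion_atTop hmonoG
  have hle : ∀ n i, w n i ≤ u i := fun n i => Monotone.ge_of_tendsto (hmono i) (ht i) n
  have h1' : (⋃ n, G n) ⊆ box u := Set.iUnion_subset fun n y hy i => (hy i).trans (hle n i)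
  have h2' : box u ⊆ (⋃ n, G n) ∪ ⋃ i, {y : ι → ℝ | y i = u i} := by
    intro y hy
    by_cases hmem : y ∈ ⋃ n, G n
    · exact Or.inl hmem
    · refine Or.inr ?_
      have hex : ∃ i, ∀ n, y i > w n i := by
        by_contra hcon
        push_neg at hcon
        choose f hf using hcon
        refine hmem (Set.mem_iUnion.2 ⟨Finset.univ.sup f, fun i => ?_⟩)
        exact (hf i).trans (hmono i (Finset.le_sup (Finset.mem_univ i)))
      obtain ⟨i, hi⟩ := hex
      have hui : u i ≤ y i :=
        le_of_tendsto (ht i) (Filter.Eventually.of_forall fun n => (hi n).le)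
      exact Set.mem_iUnion.2 ⟨i, le_antisymm (hy i) hui⟩
  have hnull : μC (⋃ i, {y : ι → ℝ | y i = u i}) = 0 :=
    measure_iUnion_null fun i => null_eval_eq μC i (hmar i) (u i)
  have heq : μC (box u) = μC (⋃ n, G n) := measure_eq_of_between μC h1' h2' hnull
  rw [heq]
  exact (ENNReal.tendsto_toReal (measure_ne_top μC _)).comp htend

end KnockoffAux

/-- If `H` (the copula construction) is a distribution function and each `D_i` is
symmetric, then `H ∘ f = H` for all swap maps `f`, hence `λ_H` is `F`-invariant with
first-`p` marginal `L(X)`, i.e. `λ_H ∈ Λ`. -/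


theorem copula_symmetric_knockoff (p : ℕ) (hp : 2 ≤ p)
    (μX : Measure (Fin p → ℝ)) [IsProbabilityMeasure μX]
    (F : Fin p → ℝ → ℝ) (hF : ∀ i t, F i t = (μX {x | x i ≤ t}).toReal)
    (C : (Fin p → ℝ) → ℝ) (hC : IsCopula C)
    (hSklar : ∀ x : Fin p → ℝ, (μX {y | ∀ i, y i ≤ x i}).toReal = C (fun i => F i (x i)))
    (D : Fin p → ℝ → ℝ → ℝ) (hD : ∀ i, IsCopula2 (D i))
    (hsym : ∀ i u v, D i u v = D i v u)
    (H : ((Fin p → ℝ) × (Fin p → ℝ)) → ℝ)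
    (hH : ∀ z, H z = C (fun i => D i (F i (z.1 i)) (F i (z.2 i))))
    (lamH : Measure ((Fin p → ℝ) × (Fin p → ℝ))) [IsProbabilityMeasure lamH]
    (hCDF : ∀ z, H z =
      (lamH {w | (∀ i, w.1 i ≤ z.1 i) ∧ (∀ i, w.2 i ≤ z.2 i)}).toReal) :
    (∀ S : Finset (Fin p), ∀ z, H (swapMap p S z) = H z) ∧
    (∀ S : Finset (Fin p), lamH.map (swapMap p S) = lamH) ∧
    lamH.map Prod.fst = μX := by
  classical
  open KnockoffAux Filter Topology in
  obtain ⟨μC, hμCprob, hμCmar, hμCform⟩ := hC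
  haveI := hμCprob
  choose μD hDprob hDfst hDsnd hDform using hD
  -- Part 1 : symmetry of H under swaps
  have part1 : ∀ S : Finset (Fin p), ∀ z, H (swapMap p S z) = H z := by
    intro S z
    rw [hH, hH]
    congr 1
    funext i
    simp only [swapMap]
    by_cases h : i ∈ S
    · simp only [if_pos h]
      exact hsym i _ _
    · simp only [if_neg h]
  -- basic cdf facts
  have hF0 : ∀ i t, 0 ≤ F i t := fun i t => by rw [hF]; exact ENNReal.toReal_nonneg
  have hF1 : ∀ i t, F i t ≤ 1 := by
    intro i t
    rw [hF]
    have h := ENNReal.toReal_mono (measure_ne_top μX Set.univ)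
      (measure_mono (Set.subset_univ {x : Fin p → ℝ | x i ≤ t}))
    simpa [measure_univ] using h
  have hFmono : ∀ i, Monotone fun n : ℕ => F i (n : ℝ) := by
    intro i m n hmn
    simp only [hF]
    refine ENNReal.toReal_mono (measure_ne_top μX _) (measure_mono ?_)
    intro x hx
    simp only [Set.mem_setOf_eq] at hx ⊢
    exact hx.trans (Nat.cast_le.2 hmn)
  have hFtend : ∀ i, Tendsto (fun n : ℕ => F i (n : ℝ)) atTop (nhds 1) := by
    intro i
    have hmono : Monotone fun n : ℕ => {x : Fin p → ℝ | x i ≤ (n : ℝ)} := by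
      intro m n hmn x hx
      simp only [Set.mem_setOf_eq] at hx ⊢
      exact hx.trans (Nat.cast_le.2 hmn)
    have htend := tendsto_measure_iUnion_atTop (μ := μX) hmono
    have huniv : (⋃ n : ℕ, {x : Fin p → ℝ | x i ≤ (n : ℝ)}) = Set.univ := by
      ext x
      simp only [Set.mem_iUnion, Set.mem_univ, iff_true, Set.mem_setOf_eq]
      exact exists_nat_ge (x i)
    rw [huniv, measure_univ] at htend
    have h2 := (ENNReal.tendsto_toReal one_ne_top).comp htend
    simp only [ENNReal.toReal_one] at h2
    have h3 : (fun n : ℕ => F i (n : ℝ)) =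
        fun n : ℕ => (μX {x : Fin p → ℝ | x i ≤ (n : ℝ)}).toReal := funext fun n => hF i _
    rw [h3]
    exact h2
  -- the key computation of `lamH` on half-infinite boxes
  have hKey : ∀ x : Fin p → ℝ, lamH (Prod.fst ⁻¹' box x) = μX (box x) := by
    intro x
    set u : Fin p → ℝ := fun i => F i (x i) with hu
    set w : ℕ → Fin p → ℝ := fun n i => D i (u i) (F i (n : ℝ)) with hw
    have hwi : ∀ i, Monotone (fun n => w n i) ∧
        Tendsto (fun n => w n i) atTop (nhds (u i)) := by
      intro i
      haveI := hDprob i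
      exact copula2_snd_tendsto (μD i) (hDfst i) (hDsnd i) (hDform i)
        (hF0 i (x i)) (hF1 i (x i)) (hFmono i) (hFtend i)
    have hCt := copula_measure_tendsto μC hμCmar (fun i => (hwi i).1) (fun i => (hwi i).2)
    -- identify the values along the sequence
    have hHn : ∀ n : ℕ, H (x, fun _ => (n : ℝ)) = (μC (box (w n))).toReal := by
      intro n
      rw [hH]
      exact hμCform (w n)
    set A : ℕ → Set ((Fin p → ℝ) × (Fin p → ℝ)) :=
      fun n => pbox x (fun _ => (n : ℝ)) with hA
    have hlamA : ∀ n, lamH (A n) = ENNReal.ofReal (H (x, fun _ => (n : ℝ))) := by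
      intro n
      rw [hCDF (x, fun _ => (n : ℝ)), ENNReal.ofReal_toReal (measure_ne_top _ _)]
      rfl
    have hmonoA : Monotone A := fun m n hmn z hz =>
      ⟨hz.1, fun i => le_trans (hz.2 i) (Nat.cast_le.2 hmn)⟩
    have htendA : Tendsto (fun n => lamH (A n)) atTop (nhds (lamH (⋃ n, A n))) :=
      tendsto_measure_iUnion_atTop hmonoA
    have hAeq : (⋃ n, A n) = Prod.fst ⁻¹' box x := by
      ext z
      simp only [Set.mem_iUnion, Set.mem_preimage, pbox, box, Set.mem_setOf_eq]
      constructor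
      · rintro ⟨n, hn, -⟩; exact hn
      · intro hz
        obtain ⟨n, hn⟩ := exists_nat_forall_le z.2
        exact ⟨n, hz, hn⟩
    have htendB : Tendsto (fun n => lamH (A n)) atTop
        (nhds (ENNReal.ofReal ((μC (box u)).toReal))) := by
      have : (fun n => lamH (A n)) =
          fun n => ENNReal.ofReal ((μC (box (w n))).toReal) := by
        funext n; rw [hlamA n, hHn n]
      rw [this]
      exact (ENNReal.continuous_ofReal.tendsto _).comp hCt
    have hlim : lamH (⋃ n, A n) = ENNReal.ofReal ((μC (box u)).toReal) :=
      tendsto_nhds_unique htendA htendB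
    have hend : ENNReal.ofReal ((μC (box u)).toReal) = μX (box x) := by
      have h1 : (μX (box x)).toReal = C u := hSklar x
      have h2 : C u = (μC (box u)).toReal := hμCform u
      rw [← h2, ← h1, ENNReal.ofReal_toReal (measure_ne_top _ _)]
    rw [← hAeq, hlim, hend]
  -- measurability of the swap maps
  have hmeas : ∀ S : Finset (Fin p), Measurable (swapMap p S) := by
    intro S
    have hm1 : Measurable (fun z : (Fin p → ℝ) × (Fin p → ℝ) =>
        fun i => if i ∈ S then z.2 i else z.1 i) :=
      measurable_pi_lambda _ fun i => by
        by_cases h : i ∈ S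
        · simpa [h, Function.comp_def] using (measurable_pi_apply i).comp
            (measurable_snd : Measurable (Prod.snd : (Fin p → ℝ) × (Fin p → ℝ) → _))
        · simpa [h, Function.comp_def] using (measurable_pi_apply i).comp
            (measurable_fst : Measurable (Prod.fst : (Fin p → ℝ) × (Fin p → ℝ) → _))
    have hm2 : Measurable (fun z : (Fin p → ℝ) × (Fin p → ℝ) =>
        fun i => if i ∈ S then z.1 i else z.2 i) :=
      measurable_pi_lambda _ fun i => by
        by_cases h : i ∈ S
        · simpa [h, Function.comp_def] using (measurable_pi_apply i).comp
            (measurable_fst : Measurable (Prod.fst : (Fin p → ℝ) × (Fin p → ℝ) → _))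
        · simpa [h, Function.comp_def] using (measurable_pi_apply i).comp
            (measurable_snd : Measurable (Prod.snd : (Fin p → ℝ) × (Fin p → ℝ) → _))
    exact hm1.prodMk hm2
  refine ⟨part1, ?_, ?_⟩
  · -- invariance of lamH under the swap maps
    intro S
    haveI : IsProbabilityMeasure (lamH.map (swapMap p S)) :=
      Measure.isProbabilityMeasure_map (hmeas S).aemeasurable
    have hbox : ∀ a b : Fin p → ℝ, lamH (pbox a b) = ENNReal.ofReal (H (a, b)) := by
      intro a b
      rw [hCDF (a, b), ENNReal.ofReal_toReal (measure_ne_top _ _)]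
      rfl
    refine ext_of_pbox _ _ fun a b => ?_
    rw [Measure.map_apply (hmeas S) (measurableSet_pbox a b)]
    have hpre : swapMap p S ⁻¹' pbox a b =
        pbox (fun i => if i ∈ S then b i else a i) (fun i => if i ∈ S then a i else b i) := by
      ext z
      simp only [Set.mem_preimage, pbox, Set.mem_setOf_eq, swapMap]
      constructor
      · rintro ⟨h1, h2⟩
        constructor <;> intro i <;> by_cases h : i ∈ S
        · have := h2 i; simp only [if_pos h] at this ⊢; exact this
        · have := h1 i; simp only [if_neg h] at this ⊢; exact this
        · have := h1 i; simp only [if_pos h] at this ⊢; exact this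
        · have := h2 i; simp only [if_neg h] at this ⊢; exact this
      · rintro ⟨h1, h2⟩
        constructor <;> intro i <;> by_cases h : i ∈ S
        · have := h2 i; simp only [if_pos h] at this ⊢; exact this
        · have := h1 i; simp only [if_neg h] at this ⊢; exact this
        · have := h1 i; simp only [if_pos h] at this ⊢; exact this
        · have := h2 i; simp only [if_neg h] at this ⊢; exact this
    rw [hpre, hbox, hbox]
    have : ((fun i => if i ∈ S then b i else a i : Fin p → ℝ),
        (fun i => if i ∈ S then a i else b i : Fin p → ℝ)) = swapMap p S (a, b) := rfl
    rw [this, part1 S (a, b)]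
  · -- the first marginal of lamH is μX
    haveI : IsProbabilityMeasure (lamH.map (Prod.fst :
        (Fin p → ℝ) × (Fin p → ℝ) → Fin p → ℝ)) :=
      Measure.isProbabilityMeasure_map measurable_fst.aemeasurable
    refine ext_of_box _ _ fun x => ?_
    rw [Measure.map_apply measurable_fst (measurableSet_box x)]
    exact hKey x
end

section
/- Let p = 2, C(u₁,u₂) = max(u₁+u₂−1, 0) (the lower Fréchet copula), D₁ = C, and D₂ any 2-copula. Then lim_{x₄→∞} H(x) = max(F₁(x₁)+F₁(x₃)+F₂(x₂)−2, 0), which is not a distribution function on ℝ³ (e.g., it can fail rectangle monotonicity), hence H is not a distribution function on ℝ⁴. -/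
open MeasureTheory Set Filter

lemma marg_val (ν : Measure ℝ) (h : ν = volume.restrict (Set.Ioo (0:ℝ) 1))
    {u : ℝ} (h0 : 0 ≤ u) (h1 : u ≤ 1) : ν (Iic u) = ENNReal.ofReal u := by
  rw [h, Measure.restrict_apply measurableSet_Iic]
  refine le_antisymm ?_ ?_
  · calc volume (Iic u ∩ Ioo 0 1) ≤ volume (Ioc 0 u) :=
        measure_mono (fun x hx => ⟨hx.2.1, hx.1⟩)
      _ = ENNReal.ofReal u := by rw [Real.volume_Ioc, sub_zero]
  · calc ENNReal.ofReal u = volume (Ioo 0 u) := by rw [Real.volume_Ioo, sub_zero]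
      _ ≤ volume (Iic u ∩ Ioo 0 1) :=
        measure_mono (fun x hx => ⟨hx.2.le, hx.1, hx.2.trans_le h1⟩)

lemma copula_bounds (D : ℝ → ℝ → ℝ) (hD : IsCopula2 D) {u v : ℝ}
    (hu0 : 0 ≤ u) (hu1 : u ≤ 1) (hv0 : 0 ≤ v) (hv1 : v ≤ 1) :
    u + v - 1 ≤ D u v ∧ D u v ≤ u := by
  obtain ⟨μ, hprob, hfst, hsnd, hval⟩ := hD
  have hmu1 : μ {y : ℝ × ℝ | y.1 ≤ u} = ENNReal.ofReal u := by
    have h1 : {y : ℝ × ℝ | y.1 ≤ u} = Prod.fst ⁻¹' (Iic u) := rfl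
    rw [h1, ← Measure.map_apply measurable_fst measurableSet_Iic]
    exact marg_val _ hfst hu0 hu1
  have hmu2 : μ {y : ℝ × ℝ | y.2 ≤ v} = ENNReal.ofReal v := by
    have h1 : {y : ℝ × ℝ | y.2 ≤ v} = Prod.snd ⁻¹' (Iic v) := rfl
    rw [h1, ← Measure.map_apply measurable_snd measurableSet_Iic]
    exact marg_val _ hsnd hv0 hv1
  set S := {y : ℝ × ℝ | y.1 ≤ u ∧ y.2 ≤ v} with hS
  have hSfin : μ S ≠ ⊤ := measure_ne_top μ S
  constructor
  · have hsub : {y : ℝ × ℝ | y.1 ≤ u} ⊆ S ∪ {y : ℝ × ℝ | y.2 ≤ v}ᶜ := by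
      intro y hy
      by_cases h : y.2 ≤ v
      · exact Or.inl ⟨hy, h⟩
      · exact Or.inr h
    have hcompl : μ ({y : ℝ × ℝ | y.2 ≤ v}ᶜ) = ENNReal.ofReal (1 - v) := by
      rw [measure_compl (show MeasurableSet {y : ℝ × ℝ | y.2 ≤ v} from measurableSet_Iic.preimage measurable_snd) (measure_ne_top _ _), hmu2,
        measure_univ, ← ENNReal.ofReal_one, ← ENNReal.ofReal_sub _ hv0]
    have h1 : ENNReal.ofReal u ≤ μ S + ENNReal.ofReal (1 - v) := by
      rw [← hmu1, ← hcompl]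
      exact (measure_mono hsub).trans (measure_union_le _ _)
    have h2 : u ≤ (μ S).toReal + (1 - v) := by
      have := ENNReal.toReal_mono (by finiteness) h1
      rwa [ENNReal.toReal_ofReal hu0, ENNReal.toReal_add hSfin (by finiteness),
        ENNReal.toReal_ofReal (by linarith)] at this
    rw [hval]
    linarith
  · rw [hval]
    have h1 : μ S ≤ ENNReal.ofReal u := hmu1 ▸ measure_mono (fun y hy => hy.1)
    have := ENNReal.toReal_mono ENNReal.ofReal_ne_top h1
    rwa [ENNReal.toReal_ofReal hu0] at this

/-- For `p = 2`, `C = D₁ = ` the lower Fréchet copula `(u+v−1)⁺` and any `2`-copula `D₂`,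
the function `H(x) = C(D₁(F₁(x₁),F₁(x₃)), D₂(F₂(x₂),F₂(x₄)))` satisfies
`lim_{x₄→∞} H(x) = (F₁(x₁)+F₁(x₃)+F₂(x₂)−2)⁺`, and `H` is not a distribution
function on `ℝ⁴`. (Here `F₁, F₂` are the continuous marginal distribution functions
of `X = (X₁, X₂)`.) -/
theorem lower_frechet_not_df
    (μX : Measure (ℝ × ℝ)) [IsProbabilityMeasure μX]
    (F₁ F₂ : ℝ → ℝ)
    (hF₁ : ∀ t, F₁ t = (μX {y | y.1 ≤ t}).toReal)
    (hF₂ : ∀ t, F₂ t = (μX {y | y.2 ≤ t}).toReal)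
    (hc₁ : Continuous F₁) (hc₂ : Continuous F₂)
    (hSklar : ∀ x : ℝ × ℝ,
      (μX {y | y.1 ≤ x.1 ∧ y.2 ≤ x.2}).toReal = max (F₁ x.1 + F₂ x.2 - 1) 0)
    (D₂ : ℝ → ℝ → ℝ) (hD₂ : IsCopula2 D₂)
    (H : ℝ → ℝ → ℝ → ℝ → ℝ)
    (hH : ∀ x₁ x₂ x₃ x₄, H x₁ x₂ x₃ x₄ =
      max (max (F₁ x₁ + F₁ x₃ - 1) 0 + D₂ (F₂ x₂) (F₂ x₄) - 1) 0) :
    (∀ x₁ x₂ x₃, Tendsto (fun x₄ => H x₁ x₂ x₃ x₄) atTop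
      (nhds (max (F₁ x₁ + F₁ x₃ + F₂ x₂ - 2) 0))) ∧
    ¬ ∃ μ : Measure (ℝ × ℝ × ℝ × ℝ), IsProbabilityMeasure μ ∧
        ∀ x₁ x₂ x₃ x₄, H x₁ x₂ x₃ x₄ =
          (μ {y | y.1 ≤ x₁ ∧ y.2.1 ≤ x₂ ∧ y.2.2.1 ≤ x₃ ∧ y.2.2.2 ≤ x₄}).toReal := by
  -- basic bounds on F₁, F₂
  have hF₁0 : ∀ t, 0 ≤ F₁ t := fun t => (hF₁ t) ▸ ENNReal.toReal_nonneg
  have hF₂0 : ∀ t, 0 ≤ F₂ t := fun t => (hF₂ t) ▸ ENNReal.toReal_nonneg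
  have hle1 : ∀ s : Set (ℝ × ℝ), (μX s).toReal ≤ 1 := by
    intro s
    have := ENNReal.toReal_mono ENNReal.one_ne_top (prob_le_one (μ := μX) (s := s))
    simpa using this
  have hF₁1 : ∀ t, F₁ t ≤ 1 := fun t => (hF₁ t) ▸ hle1 _
  have hF₂1 : ∀ t, F₂ t ≤ 1 := fun t => (hF₂ t) ▸ hle1 _
  -- F₂ → 1 at ⊤
  have hF₂top : Tendsto F₂ atTop (nhds 1) := by
    have hmono : Monotone (fun t : ℝ => {y : ℝ × ℝ | y.2 ≤ t}) :=
      fun s t hst y hy => le_trans hy hst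
    have hU : (⋃ t : ℝ, {y : ℝ × ℝ | y.2 ≤ t}) = univ :=
      eq_univ_of_forall fun y => mem_iUnion.2 ⟨y.2, le_refl y.2⟩
    have h2 := tendsto_measure_iUnion_atTop (μ := μX) hmono
    rw [hU, measure_univ] at h2
    have h3 := (ENNReal.tendsto_toReal ENNReal.one_ne_top).comp h2
    simp only [Function.comp, ENNReal.toReal_one] at h3
    exact h3.congr fun t => (hF₂ t).symm
  have hlim : ∀ x₁ x₂ x₃, Tendsto (fun x₄ => H x₁ x₂ x₃ x₄) atTop
      (nhds (max (F₁ x₁ + F₁ x₃ + F₂ x₂ - 2) 0)) := by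
    intro x₁ x₂ x₃
    have hD2lim : Tendsto (fun x₄ => D₂ (F₂ x₂) (F₂ x₄)) atTop (nhds (F₂ x₂)) := by
      have hlow : Tendsto (fun x₄ => F₂ x₂ + F₂ x₄ - 1) atTop (nhds (F₂ x₂)) := by
        have := (tendsto_const_nhds (x := F₂ x₂) (f := atTop (α := ℝ))).add hF₂top |>.sub
          (tendsto_const_nhds (x := (1:ℝ)))
        simpa using this
      refine tendsto_of_tendsto_of_tendsto_of_le_of_le hlow tendsto_const_nhds ?_ ?_
      · exact fun x₄ => (copula_bounds D₂ hD₂ (hF₂0 x₂) (hF₂1 x₂) (hF₂0 x₄) (hF₂1 x₄)).1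
      · exact fun x₄ => (copula_bounds D₂ hD₂ (hF₂0 x₂) (hF₂1 x₂) (hF₂0 x₄) (hF₂1 x₄)).2
    have hmax : max (max (F₁ x₁ + F₁ x₃ - 1) 0 + F₂ x₂ - 1) 0
        = max (F₁ x₁ + F₁ x₃ + F₂ x₂ - 2) 0 := by
      rcases le_total (F₁ x₁ + F₁ x₃ - 1) 0 with h | h
      · rw [max_eq_right h, max_eq_right (by linarith [hF₂1 x₂]),
          max_eq_right (by linarith [hF₂1 x₂])]
      · rw [max_eq_left h]
        congr 1
        ring
    have h1 : Tendsto (fun x₄ => max (max (F₁ x₁ + F₁ x₃ - 1) 0 + D₂ (F₂ x₂) (F₂ x₄) - 1) 0)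
        atTop (nhds (max (max (F₁ x₁ + F₁ x₃ - 1) 0 + F₂ x₂ - 1) 0)) :=
      ((tendsto_const_nhds.add hD2lim).sub tendsto_const_nhds).max tendsto_const_nhds
    rw [hmax] at h1
    exact h1.congr fun x₄ => (hH x₁ x₂ x₃ x₄).symm
  refine ⟨hlim, ?_⟩
  rintro ⟨μ, hprob, hμ⟩
  -- the limiting three-dimensional "distribution function"
  have hE : ∀ x₁ x₂ x₃ : ℝ,
      MeasurableSet {y : ℝ × ℝ × ℝ × ℝ | y.1 ≤ x₁ ∧ y.2.1 ≤ x₂ ∧ y.2.2.1 ≤ x₃} := by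
    intro x₁ x₂ x₃
    refine MeasurableSet.inter ?_ (MeasurableSet.inter ?_ ?_)
    · exact measurableSet_Iic.preimage measurable_fst
    · exact measurableSet_Iic.preimage (measurable_fst.comp measurable_snd)
    · exact measurableSet_Iic.preimage
        (measurable_fst.comp (measurable_snd.comp measurable_snd))
  have hg : ∀ x₁ x₂ x₃ : ℝ,
      (μ {y : ℝ × ℝ × ℝ × ℝ | y.1 ≤ x₁ ∧ y.2.1 ≤ x₂ ∧ y.2.2.1 ≤ x₃}).toReal
        = max (F₁ x₁ + F₁ x₃ + F₂ x₂ - 2) 0 := by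
    intro x₁ x₂ x₃
    have hmono : Monotone (fun x₄ : ℝ =>
        {y : ℝ × ℝ × ℝ × ℝ | y.1 ≤ x₁ ∧ y.2.1 ≤ x₂ ∧ y.2.2.1 ≤ x₃ ∧ y.2.2.2 ≤ x₄}) :=
      fun s t hst y hy => ⟨hy.1, hy.2.1, hy.2.2.1, hy.2.2.2.trans hst⟩
    have hUn : (⋃ x₄ : ℝ,
        {y : ℝ × ℝ × ℝ × ℝ | y.1 ≤ x₁ ∧ y.2.1 ≤ x₂ ∧ y.2.2.1 ≤ x₃ ∧ y.2.2.2 ≤ x₄})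
        = {y : ℝ × ℝ × ℝ × ℝ | y.1 ≤ x₁ ∧ y.2.1 ≤ x₂ ∧ y.2.2.1 ≤ x₃} := by
      ext y
      simp only [mem_iUnion, mem_setOf_eq]
      constructor
      · rintro ⟨x₄, h1, h2, h3, _⟩; exact ⟨h1, h2, h3⟩
      · rintro ⟨h1, h2, h3⟩; exact ⟨y.2.2.2, h1, h2, h3, le_refl _⟩
    have ht := tendsto_measure_iUnion_atTop (μ := μ) hmono
    rw [hUn] at ht
    have ht' := (ENNReal.tendsto_toReal (measure_ne_top μ _)).comp ht
    simp only [Function.comp_def] at ht'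
    refine tendsto_nhds_unique ?_ (hlim x₁ x₂ x₃)
    exact ht'.congr fun x₄ => (hμ x₁ x₂ x₃ x₄).symm
  -- monotonicity of F₁, F₂
  have hm₁ : Monotone F₁ := by
    intro s t hst
    rw [hF₁, hF₁]
    exact ENNReal.toReal_mono (measure_ne_top _ _)
      (measure_mono fun y hy => le_trans hy hst)
  have hm₂ : Monotone F₂ := by
    intro s t hst
    rw [hF₂, hF₂]
    exact ENNReal.toReal_mono (measure_ne_top _ _)
      (measure_mono fun y hy => le_trans hy hst)
  -- find points where F₁, F₂ are small / large / equal to 1/2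
  have hF₁top : Tendsto F₁ atTop (nhds 1) := by
    have hmono : Monotone (fun t : ℝ => {y : ℝ × ℝ | y.1 ≤ t}) :=
      fun s t hst y hy => le_trans hy hst
    have hU : (⋃ t : ℝ, {y : ℝ × ℝ | y.1 ≤ t}) = univ :=
      eq_univ_of_forall fun y => mem_iUnion.2 ⟨y.1, le_refl y.1⟩
    have h2 := tendsto_measure_iUnion_atTop (μ := μX) hmono
    rw [hU, measure_univ] at h2
    have h3 := (ENNReal.tendsto_toReal ENNReal.one_ne_top).comp h2
    simp only [Function.comp, ENNReal.toReal_one] at h3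
    exact h3.congr fun t => (hF₁ t).symm
  have hF₁bot : Tendsto F₁ atBot (nhds 0) := by
    have hmono : Monotone (fun t : ℝ => {y : ℝ × ℝ | y.1 ≤ t}) :=
      fun s t hst y hy => le_trans hy hst
    have hI : (⋂ t : ℝ, {y : ℝ × ℝ | y.1 ≤ t}) = ∅ := by
      ext y
      simp only [mem_iInter, mem_setOf_eq, mem_empty_iff_false, iff_false, not_forall]
      exact ⟨y.1 - 1, by linarith⟩
    have h2 := tendsto_measure_iInter_atBot (μ := μX)
      (s := fun t : ℝ => {y : ℝ × ℝ | y.1 ≤ t})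
      (fun t => (measurableSet_Iic.preimage measurable_fst).nullMeasurableSet) hmono
      ⟨0, measure_ne_top _ _⟩
    rw [hI, measure_empty] at h2
    have h3 := (ENNReal.tendsto_toReal ENNReal.zero_ne_top).comp h2
    simp only [Function.comp, ENNReal.toReal_zero] at h3
    exact h3.congr fun t => (hF₁ t).symm
  have hF₂bot : Tendsto F₂ atBot (nhds 0) := by
    have hmono : Monotone (fun t : ℝ => {y : ℝ × ℝ | y.2 ≤ t}) :=
      fun s t hst y hy => le_trans hy hst
    have hI : (⋂ t : ℝ, {y : ℝ × ℝ | y.2 ≤ t}) = ∅ := by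
      ext y
      simp only [mem_iInter, mem_setOf_eq, mem_empty_iff_false, iff_false, not_forall]
      exact ⟨y.2 - 1, by linarith⟩
    have h2 := tendsto_measure_iInter_atBot (μ := μX)
      (s := fun t : ℝ => {y : ℝ × ℝ | y.2 ≤ t})
      (fun t => (measurableSet_Iic.preimage measurable_snd).nullMeasurableSet) hmono
      ⟨0, measure_ne_top _ _⟩
    rw [hI, measure_empty] at h2
    have h3 := (ENNReal.tendsto_toReal ENNReal.zero_ne_top).comp h2
    simp only [Function.comp, ENNReal.toReal_zero] at h3
    exact h3.congr fun t => (hF₂ t).symm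
  obtain ⟨s₁, hs₁⟩ := (hF₁bot.eventually_lt_const (by norm_num : (0:ℝ) < 1/2)).exists
  obtain ⟨s₂, hs₂⟩ := (hF₂bot.eventually_lt_const (by norm_num : (0:ℝ) < 1/2)).exists
  obtain ⟨b₁, hb₁⟩ := (hF₁top.eventually_const_lt (by norm_num : (23:ℝ)/24 < 1)).exists
  obtain ⟨b₂, hb₂⟩ := (hF₂top.eventually_const_lt (by norm_num : (23:ℝ)/24 < 1)).exists
  have hs₁b₁ : s₁ ≤ b₁ := by
    by_contra h
    have := hm₁ (le_of_not_ge h)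
    linarith
  have hs₂b₂ : s₂ ≤ b₂ := by
    by_contra h
    have := hm₂ (le_of_not_ge h)
    linarith
  obtain ⟨a₁, -, ha₁⟩ := intermediate_value_Icc hs₁b₁ hc₁.continuousOn
    (show (1/2:ℝ) ∈ Icc (F₁ s₁) (F₁ b₁) from ⟨hs₁.le, by linarith⟩)
  obtain ⟨a₂, -, ha₂⟩ := intermediate_value_Icc hs₂b₂ hc₂.continuousOn
    (show (1/2:ℝ) ∈ Icc (F₂ s₂) (F₂ b₂) from ⟨hs₂.le, by linarith⟩)
  -- the three sets
  set A := {y : ℝ × ℝ × ℝ × ℝ | y.1 ≤ a₁ ∧ y.2.1 ≤ b₂ ∧ y.2.2.1 ≤ b₁} with hA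
  set B := {y : ℝ × ℝ × ℝ × ℝ | y.1 ≤ b₁ ∧ y.2.1 ≤ b₂ ∧ y.2.2.1 ≤ a₁} with hB
  set C := {y : ℝ × ℝ × ℝ × ℝ | y.1 ≤ b₁ ∧ y.2.1 ≤ a₂ ∧ y.2.2.1 ≤ b₁} with hC
  have hzero : ∀ x₁ x₂ x₃ : ℝ, F₁ x₁ + F₁ x₃ + F₂ x₂ - 2 ≤ 0 →
      μ {y : ℝ × ℝ × ℝ × ℝ | y.1 ≤ x₁ ∧ y.2.1 ≤ x₂ ∧ y.2.2.1 ≤ x₃} = 0 := by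
    intro x₁ x₂ x₃ h
    have h1 := hg x₁ x₂ x₃
    rw [max_eq_right h] at h1
    rcases (ENNReal.toReal_eq_zero_iff _).mp h1 with h2 | h2
    · exact h2
    · exact absurd h2 (measure_ne_top _ _)
  have hAB : μ (A ∩ B) = 0 := by
    refine le_antisymm ?_ zero_le
    calc μ (A ∩ B) ≤ μ {y : ℝ × ℝ × ℝ × ℝ | y.1 ≤ a₁ ∧ y.2.1 ≤ b₂ ∧ y.2.2.1 ≤ a₁} :=
          measure_mono fun y hy => ⟨hy.1.1, hy.1.2.1, hy.2.2.2⟩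
      _ = 0 := hzero _ _ _ (by rw [ha₁]; linarith [hF₂1 b₂])
  have hAC : μ (A ∩ C) = 0 := by
    refine le_antisymm ?_ zero_le
    calc μ (A ∩ C) ≤ μ {y : ℝ × ℝ × ℝ × ℝ | y.1 ≤ a₁ ∧ y.2.1 ≤ a₂ ∧ y.2.2.1 ≤ b₁} :=
          measure_mono fun y hy => ⟨hy.1.1, hy.2.2.1, hy.1.2.2⟩
      _ = 0 := hzero _ _ _ (by rw [ha₁, ha₂]; linarith [hF₁1 b₁])
  have hBC : μ (B ∩ C) = 0 := by
    refine le_antisymm ?_ zero_le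
    calc μ (B ∩ C) ≤ μ {y : ℝ × ℝ × ℝ × ℝ | y.1 ≤ b₁ ∧ y.2.1 ≤ a₂ ∧ y.2.2.1 ≤ a₁} :=
          measure_mono fun y hy => ⟨hy.1.1, hy.2.2.1, hy.1.2.2⟩
      _ = 0 := hzero _ _ _ (by rw [ha₁, ha₂]; linarith [hF₁1 b₁])
  -- lower bounds
  have hge : ∀ x₁ x₂ x₃ : ℝ, (5:ℝ)/12 ≤ F₁ x₁ + F₁ x₃ + F₂ x₂ - 2 →
      ENNReal.ofReal (5/12) ≤
        μ {y : ℝ × ℝ × ℝ × ℝ | y.1 ≤ x₁ ∧ y.2.1 ≤ x₂ ∧ y.2.2.1 ≤ x₃} := by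
    intro x₁ x₂ x₃ h
    refine ENNReal.ofReal_le_of_le_toReal ?_
    rw [hg x₁ x₂ x₃]
    exact le_max_of_le_left h
  have hAge : ENNReal.ofReal (5/12) ≤ μ A :=
    hge _ _ _ (by rw [ha₁]; linarith)
  have hBge : ENNReal.ofReal (5/12) ≤ μ B :=
    hge _ _ _ (by rw [ha₁]; linarith)
  have hCge : ENNReal.ofReal (5/12) ≤ μ C :=
    hge _ _ _ (by rw [ha₂]; linarith)
  -- the superadditivity contradiction
  have hBmeas : MeasurableSet B := hE b₁ b₂ a₁
  have hCmeas : MeasurableSet C := hE b₁ a₂ b₁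
  have key : μ A + μ B + μ C ≤ 1 := by
    have e1 : μ A + μ B = μ (A ∪ B) + μ (A ∩ B) := (measure_union_add_inter A hBmeas).symm
    have e2 : μ (A ∪ B) + μ C = μ ((A ∪ B) ∪ C) + μ ((A ∪ B) ∩ C) :=
      (measure_union_add_inter (A ∪ B) hCmeas).symm
    have e3 : μ ((A ∪ B) ∩ C) ≤ μ (A ∩ C) + μ (B ∩ C) := by
      rw [union_inter_distrib_right]
      exact measure_union_le _ _
    calc μ A + μ B + μ C = μ (A ∪ B) + μ (A ∩ B) + μ C := by rw [e1]
      _ = μ (A ∪ B) + μ C + μ (A ∩ B) := by ring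
      _ = μ ((A ∪ B) ∪ C) + μ ((A ∪ B) ∩ C) + μ (A ∩ B) := by rw [e2]
      _ ≤ 1 + (μ (A ∩ C) + μ (B ∩ C)) + μ (A ∩ B) :=
          add_le_add (add_le_add prob_le_one e3) le_rfl
      _ = 1 := by rw [hAB, hAC, hBC]; simp
  have : ENNReal.ofReal (5/12) + ENNReal.ofReal (5/12) + ENNReal.ofReal (5/12) ≤ 1 :=
    le_trans (add_le_add (add_le_add hAge hBge) hCge) key
  rw [← ENNReal.ofReal_add (by norm_num) (by norm_num),
    ← ENNReal.ofReal_add (by norm_num) (by norm_num)] at this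
  have h54 := ENNReal.ofReal_le_one.mp this
  norm_num at h54
end

section
/- Let L(X) be the mixture P(X ∈ A₁×⋯×A_p) = ∫_Θ Π_{i=1}^p Q_i(A_i, θ) γ(dθ), where each Q_i(·,θ) has density f_i(·,θ) with respect to a σ-finite measure ν_i. Then q(y₁,...,y_{2p}) = ∫_Θ Π_{i=1}^p f_i(y_i,θ) Π_{i=1}^p f_i(y_{p+i},θ) γ(dθ) is the density (with respect to (ν₁×⋯×ν_p)²) of a probability measure λ on ℝ^{2p} with λ ∈ Λ, i.e., λ is F-invariant and its first-p marginal is L(X). -/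
open MeasureTheory Set
open scoped ENNReal

private lemma lintegral_pi_fin_prod : ∀ {n : ℕ} (μ : Fin n → Measure ℝ),
    (∀ i, SigmaFinite (μ i)) →
    ∀ (g : Fin n → ℝ → ℝ≥0∞), (∀ i, Measurable (g i)) →
    ∫⁻ x, ∏ i, g i (x i) ∂Measure.pi μ = ∏ i, ∫⁻ t, g i t ∂μ i := by
  intro n
  induction n with
  | zero =>
    intro μ _ g hg
    simp [lintegral_const, Measure.pi_univ]
  | succ n ih =>
    intro μ hσ g hg
    haveI := hσ
    have hMP := measurePreserving_piFinSuccAbove μ 0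
    have hG : Measurable fun y : ℝ × (Fin n → ℝ) =>
        g 0 y.1 * ∏ j : Fin n, g j.succ (y.2 j) := by
      refine ((hg 0).comp measurable_fst).mul ?_
      exact Finset.measurable_prod _ fun j _ => (hg j.succ).comp
        ((measurable_pi_apply j).comp measurable_snd)
    calc ∫⁻ x, ∏ i, g i (x i) ∂Measure.pi μ
        = ∫⁻ x, (fun y : ℝ × (Fin n → ℝ) => g 0 y.1 * ∏ j : Fin n, g j.succ (y.2 j))
            (MeasurableEquiv.piFinSuccAbove (fun _ => ℝ) 0 x) ∂Measure.pi μ := by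
          refine lintegral_congr fun x => ?_
          simp [MeasurableEquiv.piFinSuccAbove, Fin.prod_univ_succ, Fin.succAbove_zero, Fin.tail]
      _ = ∫⁻ y, g 0 y.1 * ∏ j : Fin n, g j.succ (y.2 j)
            ∂((μ 0).prod (Measure.pi fun j => μ ((0 : Fin (n+1)).succAbove j))) :=
          hMP.lintegral_comp hG
      _ = (∫⁻ t, g 0 t ∂μ 0) * ∫⁻ x, ∏ j : Fin n, g j.succ (x j)
            ∂Measure.pi (fun j => μ ((0 : Fin (n+1)).succAbove j)) :=
          lintegral_prod_mul ((hg 0).aemeasurable)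
            ((Finset.measurable_prod Finset.univ fun (j : Fin n) _ =>
              (hg j.succ).comp (measurable_pi_apply j)).aemeasurable)
      _ = (∫⁻ t, g 0 t ∂μ 0) * ∏ j : Fin n, ∫⁻ t, g j.succ t ∂μ j.succ := by
          have h2 : (fun j : Fin n => μ ((0 : Fin (n+1)).succAbove j)) = fun j => μ j.succ := by
            funext j; simp [Fin.succAbove_zero]
          rw [h2, ih _ (fun j => hσ j.succ) _ (fun j => hg j.succ)]
      _ = ∏ i, ∫⁻ t, g i t ∂μ i := by rw [Fin.prod_univ_succ fun i => ∫⁻ t, g i t ∂μ i]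

/-- Mixture model: if `L(X)` is the `γ`-mixture of products `∏ Q_i(·,θ)`, where
`Q_i(·,θ)` has density `f_i(·,θ)` w.r.t. a σ-finite `ν_i`, then
`q(y) = ∫_Θ ∏ f_i(y_i,θ) ∏ f_i(y_{p+i},θ) γ(dθ)` is the density w.r.t. `(ν₁×⋯×ν_p)²`
of a probability measure `λ` which is `F`-invariant with first-`p` marginal `L(X)`,
i.e. `λ ∈ Λ`. -/
theorem mixture_knockoff {Θ : Type*} [MeasurableSpace Θ] (p : ℕ) (hp : 2 ≤ p)
    (γ : Measure Θ) [IsProbabilityMeasure γ]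
    (ν : Fin p → Measure ℝ) [∀ i, SigmaFinite (ν i)]
    (f : Fin p → ℝ → Θ → ℝ≥0∞)
    (hf : ∀ i, Measurable (Function.uncurry (f i)))
    (hfprob : ∀ i θ, ∫⁻ t, f i t θ ∂(ν i) = 1)
    (μX : Measure (Fin p → ℝ)) [IsProbabilityMeasure μX]
    (hmix : ∀ A : Fin p → Set ℝ, (∀ i, MeasurableSet (A i)) →
      μX {x | ∀ i, x i ∈ A i} = ∫⁻ θ, ∏ i, ∫⁻ t in A i, f i t θ ∂(ν i) ∂γ)
    (lam : Measure ((Fin p → ℝ) × (Fin p → ℝ)))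
    (hlam : lam = ((Measure.pi ν).prod (Measure.pi ν)).withDensity
      (fun z => ∫⁻ θ, (∏ i, f i (z.1 i) θ) * ∏ i, f i (z.2 i) θ ∂γ)) :
    IsProbabilityMeasure lam ∧
    (∀ S : Finset (Fin p), lam.map (swapMap p S) = lam) ∧
    lam.map Prod.fst = μX := by
  classical
  -- measurability helpers
  have hfi : ∀ i, Measurable fun q : ℝ × Θ => f i q.1 q.2 := fun i => hf i
  have hP : Measurable fun w : (Fin p → ℝ) × Θ => ∏ i, f i (w.1 i) w.2 :=
    Finset.measurable_prod _ fun i _ =>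
      (hfi i).comp (((measurable_pi_apply (X := fun _ : Fin p => ℝ) i).comp measurable_fst).prodMk measurable_snd)
  have hPθ : ∀ θ, Measurable fun x : Fin p → ℝ => ∏ i, f i (x i) θ := fun θ =>
    Finset.measurable_prod _ fun i _ =>
      (hfi i).comp' ((measurable_pi_apply (X := fun _ : Fin p => ℝ) i).prodMk measurable_const)
  have hfθ : ∀ (i : Fin p) θ, Measurable fun t => f i t θ := fun i θ =>
    (hfi i).comp' (measurable_id.prodMk measurable_const)
  have hQmeas : Measurable fun w : ((Fin p → ℝ) × (Fin p → ℝ)) × Θ =>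
      (∏ i, f i (w.1.1 i) w.2) * ∏ i, f i (w.1.2 i) w.2 :=
    (hP.comp ((measurable_fst.fst).prodMk measurable_snd)).mul
      (hP.comp ((measurable_fst.snd).prodMk measurable_snd))
  have hq : Measurable fun z : (Fin p → ℝ) × (Fin p → ℝ) =>
      ∫⁻ θ, (∏ i, f i (z.1 i) θ) * ∏ i, f i (z.2 i) θ ∂γ :=
    hQmeas.lintegral_prod_right'
  -- restricting a product of measures to a box
  have hrest : ∀ (C : Fin p → Set ℝ), (∀ i, MeasurableSet (C i)) →
      (Measure.pi ν).restrict (univ.pi C) = Measure.pi (fun i => (ν i).restrict (C i)) := by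
    intro C hC
    refine (Measure.pi_eq fun s hs => ?_).symm
    rw [Measure.restrict_apply (MeasurableSet.univ_pi hs), ← Set.pi_inter_distrib, Measure.pi_pi]
    exact Finset.prod_congr rfl fun i _ => (Measure.restrict_apply (hs i)).symm
  -- measurability of θ ↦ ∏ ∫ over a box
  have hcD : ∀ (D : Fin p → Set ℝ),
      Measurable fun θ => ∏ i, ∫⁻ t in D i, f i t θ ∂ν i := by
    intro D
    refine Finset.measurable_prod _ fun i _ => ?_
    exact Measurable.lintegral_prod_right'
      ((hfi i).comp' (measurable_snd.prodMk measurable_fst))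
  -- the key computation on boxes
  have key : ∀ C D : Fin p → Set ℝ, (∀ i, MeasurableSet (C i)) → (∀ i, MeasurableSet (D i)) →
      lam ((univ.pi C) ×ˢ (univ.pi D)) =
        ∫⁻ θ, (∏ i, ∫⁻ t in C i, f i t θ ∂ν i) * ∏ i, ∫⁻ t in D i, f i t θ ∂ν i ∂γ := by
    intro C D hC hD
    rw [hlam, withDensity_apply _ ((MeasurableSet.univ_pi hC).prod (MeasurableSet.univ_pi hD)),
      ← Measure.prod_restrict, hrest C hC, hrest D hD,
      lintegral_prod _ hq.aemeasurable]
    have inner : ∀ x : Fin p → ℝ,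
        (∫⁻ y, ∫⁻ θ, (∏ i, f i (x i) θ) * ∏ i, f i (y i) θ ∂γ
          ∂Measure.pi (fun i => (ν i).restrict (D i)))
        = ∫⁻ θ, (∏ i, f i (x i) θ) * ∏ i, ∫⁻ t in D i, f i t θ ∂ν i ∂γ := by
      intro x
      rw [lintegral_lintegral_swap]
      · refine lintegral_congr fun θ => ?_
        rw [lintegral_const_mul _ (hPθ θ)]
        congr 1
        exact lintegral_pi_fin_prod _ (fun i => inferInstance) _ (fun i => hfθ i θ)
      · exact ((hP.comp (measurable_const.prodMk measurable_snd)).mul hP).aemeasurable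
    calc ∫⁻ x, ∫⁻ y, ∫⁻ θ, (∏ i, f i (x i) θ) * ∏ i, f i (y i) θ ∂γ
            ∂Measure.pi (fun i => (ν i).restrict (D i))
            ∂Measure.pi (fun i => (ν i).restrict (C i))
        = ∫⁻ x, ∫⁻ θ, (∏ i, f i (x i) θ) * ∏ i, ∫⁻ t in D i, f i t θ ∂ν i ∂γ
            ∂Measure.pi (fun i => (ν i).restrict (C i)) := lintegral_congr inner
      _ = ∫⁻ θ, ∫⁻ x, (∏ i, f i (x i) θ) * ∏ i, ∫⁻ t in D i, f i t θ ∂ν i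
            ∂Measure.pi (fun i => (ν i).restrict (C i)) ∂γ := by
          refine lintegral_lintegral_swap ?_
          exact (hP.mul ((hcD D).comp measurable_snd)).aemeasurable
      _ = ∫⁻ θ, (∏ i, ∫⁻ t in C i, f i t θ ∂ν i) * ∏ i, ∫⁻ t in D i, f i t θ ∂ν i ∂γ := by
          refine lintegral_congr fun θ => ?_
          rw [lintegral_mul_const _ (hPθ θ)]
          congr 1
          exact lintegral_pi_fin_prod _ (fun i => inferInstance) _ (fun i => hfθ i θ)
  -- lam is a probability measure
  have huniv : lam univ = 1 := by
    have hu : (univ : Set ((Fin p → ℝ) × (Fin p → ℝ))) =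
        (univ.pi fun _ : Fin p => (univ : Set ℝ)) ×ˢ (univ.pi fun _ : Fin p => (univ : Set ℝ)) := by
      simp
    rw [hu, key _ _ (fun _ => MeasurableSet.univ) (fun _ => MeasurableSet.univ)]
    simp [Measure.restrict_univ, hfprob]
  haveI hlamP : IsProbabilityMeasure lam := ⟨huniv⟩
  refine ⟨hlamP, ?_, ?_⟩
  · -- swap invariance
    intro S
    have hswapMeas : Measurable (swapMap p S) := by
      refine Measurable.prodMk ?_ ?_ <;> refine measurable_pi_iff.2 fun i => ?_ <;>
        by_cases hi : i ∈ S <;> simp only [swapMap, hi, if_true, if_false]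
      · exact (measurable_pi_apply i).comp measurable_snd
      · exact (measurable_pi_apply i).comp measurable_fst
      · exact (measurable_pi_apply i).comp measurable_fst
      · exact (measurable_pi_apply i).comp measurable_snd
    haveI : IsProbabilityMeasure (lam.map (swapMap p S)) :=
      Measure.isProbabilityMeasure_map hswapMeas.aemeasurable
    have hspan : IsCountablySpanning
        (pi univ '' pi univ fun _ : Fin p => {s : Set ℝ | MeasurableSet s}) :=
      ⟨fun _ => univ.pi fun _ => univ,
        fun _ => mem_image_of_mem _ fun i _ => by simp only [Set.mem_setOf_eq]; exact MeasurableSet.univ, by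
          simp [Set.iUnion_const]⟩
    refine ext_of_generate_finite _
      ((generateFrom_eq_prod generateFrom_pi generateFrom_pi hspan hspan).symm)
      (isPiSystem_pi.prod isPiSystem_pi) ?_ (by simp)
    rintro _ ⟨s, ⟨C, hC, rfl⟩, _, ⟨D, hD, rfl⟩, rfl⟩
    have hC' : ∀ i, MeasurableSet (C i) := fun i => hC i (mem_univ i)
    have hD' : ∀ i, MeasurableSet (D i) := fun i => hD i (mem_univ i)
    rw [Measure.map_apply hswapMeas
      ((MeasurableSet.univ_pi hC').prod (MeasurableSet.univ_pi hD'))]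
    have hpre : swapMap p S ⁻¹' ((univ.pi C) ×ˢ (univ.pi D)) =
        (univ.pi fun i => if i ∈ S then D i else C i) ×ˢ
          (univ.pi fun i => if i ∈ S then C i else D i) := by
      ext z
      simp only [mem_preimage, swapMap, mem_prod, mem_univ_pi]
      constructor
      · rintro ⟨h1, h2⟩
        refine ⟨fun i => ?_, fun i => ?_⟩
        · by_cases hi : i ∈ S
          · simpa [hi] using h2 i
          · simpa [hi] using h1 i
        · by_cases hi : i ∈ S
          · simpa [hi] using h1 i
          · simpa [hi] using h2 i
      · rintro ⟨h1, h2⟩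
        refine ⟨fun i => ?_, fun i => ?_⟩
        · by_cases hi : i ∈ S
          · simpa [hi] using h2 i
          · simpa [hi] using h1 i
        · by_cases hi : i ∈ S
          · simpa [hi] using h1 i
          · simpa [hi] using h2 i
    rw [hpre, key _ _ (fun i => by by_cases hi : i ∈ S <;> simp [hi, hC' i, hD' i])
        (fun i => by by_cases hi : i ∈ S <;> simp [hi, hC' i, hD' i]),
      key _ _ hC' hD']
    refine lintegral_congr fun θ => ?_
    rw [← Finset.prod_mul_distrib, ← Finset.prod_mul_distrib]
    refine Finset.prod_congr rfl fun i _ => ?_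
    by_cases hi : i ∈ S <;> simp [hi, mul_comm]
  · -- marginal
    have hbox : ∀ A : Fin p → Set ℝ, (∀ i, MeasurableSet (A i)) →
        lam.map Prod.fst (univ.pi A) = μX (univ.pi A) := by
      intro A hA
      rw [Measure.map_apply measurable_fst (MeasurableSet.univ_pi hA)]
      have hpre : (Prod.fst ⁻¹' (univ.pi A) : Set ((Fin p → ℝ) × (Fin p → ℝ)))
          = (univ.pi A) ×ˢ (univ.pi fun _ : Fin p => (univ : Set ℝ)) := by
        ext z; simp [Set.mem_univ_pi]
      rw [hpre, key _ _ hA (fun _ => MeasurableSet.univ)]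
      have hAeq : {x : Fin p → ℝ | ∀ i, x i ∈ A i} = univ.pi A := by
        ext x; simp
      rw [← hAeq, hmix A hA]
      refine lintegral_congr fun θ => ?_
      simp [Measure.restrict_univ, hfprob]
    haveI : IsProbabilityMeasure (lam.map (Prod.fst :
        ((Fin p → ℝ) × (Fin p → ℝ)) → (Fin p → ℝ))) :=
      Measure.isProbabilityMeasure_map measurable_fst.aemeasurable
    refine ext_of_generate_finite _ generateFrom_pi.symm isPiSystem_pi ?_ (by simp)
    rintro _ ⟨A, hA, rfl⟩
    exact hbox A fun i => hA i (mem_univ i)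
end

section
/- Let X be a p-variate random vector whose law is absolutely continuous with respect to Lebesgue measure on ℝ^p, let U be uniform on (0,1)^p independent of X, and define X^{(n)}_i = ([n X_i] + U_i)/n where [·] is the integer part. Then sup_{A Borel ⊆ ℝ^p} |P(X ∈ A) − P(X^{(n)} ∈ A)| → 0 as n → ∞. -/
open MeasureTheory Set ProbabilityTheory

namespace DTV

open Metric Filter
open scoped ENNReal NNReal

noncomputable section

def box (p n : ℕ) (k : Fin p → ℤ) : Set (Fin p → ℝ) :=
  univ.pi fun i => Ico ((k i : ℝ)/n) (((k i : ℝ)+1)/n)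

def flr (p n : ℕ) (x : Fin p → ℝ) : Fin p → ℤ := fun i => ⌊(n:ℝ) * x i⌋

lemma measurable_flr (p n : ℕ) : Measurable (flr p n) :=
  measurable_pi_lambda _ fun i => ((measurable_pi_apply i).const_mul _).floor

lemma measurableSet_box (p n : ℕ) (k : Fin p → ℤ) : MeasurableSet (box p n k) :=
  MeasurableSet.univ_pi fun _ => measurableSet_Ico

lemma mem_box_iff {p n : ℕ} (hn : 1 ≤ n) {k : Fin p → ℤ} {z : Fin p → ℝ} :
    z ∈ box p n k ↔ flr p n z = k := by
  have hn0 : (0:ℝ) < n := by exact_mod_cast hn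
  simp only [box, Set.mem_univ_pi, mem_Ico, flr, funext_iff]
  refine forall_congr' fun i => ?_
  rw [Int.floor_eq_iff]
  constructor
  · rintro ⟨h1, h2⟩
    rw [div_le_iff₀ hn0] at h1
    rw [lt_div_iff₀ hn0] at h2
    constructor <;> push_cast <;> nlinarith [mul_comm (z i) (n:ℝ)]
  · rintro ⟨h1, h2⟩
    push_cast at h1 h2
    rw [div_le_iff₀ hn0, lt_div_iff₀ hn0]
    constructor <;> nlinarith [mul_comm (z i) (n:ℝ)]

lemma face_null (p : ℕ) (i : Fin p) (c : ℝ) :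
    volume {z : Fin p → ℝ | z i = c} = 0 := by
  have : {z : Fin p → ℝ | z i = c} = univ.pi (fun j => if j = i then {c} else univ) := by
    ext z
    simp only [mem_setOf_eq, Set.mem_univ_pi]
    constructor
    · intro h j
      by_cases hj : j = i
      · subst hj; simp [h]
      · simp [hj]
    · intro h
      have := h i; simpa using this
  rw [this, volume_pi, Measure.pi_pi]
  refine Finset.prod_eq_zero (Finset.mem_univ i) ?_
  simp

lemma pi_Icc_diff_pi_Ioo_null (p : ℕ) (a b : Fin p → ℝ) :
    volume ((univ.pi fun i => Icc (a i) (b i)) \ (univ.pi fun i => Ioo (a i) (b i))) = 0 := by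
  have hsub : (univ.pi fun i => Icc (a i) (b i)) \ (univ.pi fun i => Ioo (a i) (b i)) ⊆
      ⋃ i, ({z : Fin p → ℝ | z i = a i} ∪ {z | z i = b i}) := by
    rintro z ⟨hz1, hz2⟩
    simp only [Set.mem_univ_pi] at hz1 hz2
    push_neg at hz2
    obtain ⟨i, hi⟩ := hz2
    rcases hz1 i with ⟨h1, h2⟩
    rcases lt_or_eq_of_le h1 with h1' | h1'
    · rcases lt_or_eq_of_le h2 with h2' | h2'
      · simp only [mem_Ioo, not_and, not_lt] at hi
        exact absurd h2' (not_lt.2 (hi h1'))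
      · exact mem_iUnion.2 ⟨i, Or.inr h2'⟩
    · exact mem_iUnion.2 ⟨i, Or.inl h1'.symm⟩
  refine measure_mono_null hsub (le_antisymm (le_trans (measure_iUnion_le _) ?_) zero_le)
  have : ∀ i : Fin p, volume ({z : Fin p → ℝ | z i = a i} ∪ {z | z i = b i}) = 0 := fun i =>
    measure_union_null (face_null p i (a i)) (face_null p i (b i))
  simp [this]

lemma ae_eq_of_subset_null {α} [MeasurableSpace α] {μ : Measure α} {s t : Set α}
    (h : s ⊆ t) (hnull : μ (t \ s) = 0) : s =ᵐ[μ] t := by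
  rw [ae_eq_set]
  exact ⟨by simp [diff_eq_empty.2 h], hnull⟩

lemma box_ae_Ioo (p n : ℕ) (k : Fin p → ℤ) :
    (univ.pi fun i => Ioo ((k i : ℝ)/n) (((k i : ℝ)+1)/n)) =ᵐ[volume] box p n k := by
  refine ae_eq_of_subset_null (pi_mono fun i _ => Ioo_subset_Ico_self) ?_
  refine measure_mono_null (fun z hz => ?_) (pi_Icc_diff_pi_Ioo_null p
    (fun i => (k i : ℝ)/n) (fun i => ((k i : ℝ)+1)/n))
  exact ⟨pi_mono (fun i _ => Ico_subset_Icc_self) hz.1, hz.2⟩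

lemma box_ae_Icc (p n : ℕ) (k : Fin p → ℤ) :
    box p n k =ᵐ[volume] (univ.pi fun i => Icc ((k i : ℝ)/n) (((k i : ℝ)+1)/n)) := by
  refine ae_eq_of_subset_null (pi_mono fun i _ => Ico_subset_Icc_self) ?_
  refine measure_mono_null (fun z hz => ?_) (pi_Icc_diff_pi_Ioo_null p
    (fun i => (k i : ℝ)/n) (fun i => ((k i : ℝ)+1)/n))
  exact ⟨hz.1, fun h => hz.2 (pi_mono (fun i _ => Ioo_subset_Ico_self) h)⟩

lemma map_affine_1d {n : ℕ} (hn : 1 ≤ n) (k : ℤ) :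
    (volume.restrict (Ioo (0:ℝ) 1)).map (fun u : ℝ => ((k:ℝ) + u)/n)
      = (n : ℝ≥0∞) • volume.restrict (Ioo ((k:ℝ)/n) (((k:ℝ)+1)/n)) := by
  have hn0 : (0:ℝ) < n := by exact_mod_cast hn
  have hmeas : Measurable (fun u : ℝ => ((k:ℝ) + u)/n) :=
    (measurable_id.const_add _).div_const _
  have hpre : (fun u : ℝ => ((k:ℝ) + u)/n) ⁻¹' (Ioo ((k:ℝ)/n) (((k:ℝ)+1)/n)) = Ioo 0 1 := by
    ext u
    simp only [mem_preimage, mem_Ioo]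
    rw [div_lt_div_iff_of_pos_right hn0, div_lt_div_iff_of_pos_right hn0]
    constructor <;> rintro ⟨h1, h2⟩ <;> constructor <;> linarith
  have hcomp : (fun u : ℝ => ((k:ℝ) + u)/n) = (fun v : ℝ => v * (n:ℝ)⁻¹) ∘ (fun u => (k:ℝ) + u) := by
    funext u; simp [div_eq_mul_inv]
  have hmapvol : volume.map (fun u : ℝ => ((k:ℝ) + u)/n) = (n : ℝ≥0∞) • volume := by
    rw [hcomp, ← Measure.map_map (measurable_id'.mul_const ((n:ℝ)⁻¹)) (measurable_const_add (k:ℝ)),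
      map_add_left_eq_self volume (k:ℝ), Real.map_volume_mul_right (by positivity : (n:ℝ)⁻¹ ≠ 0)]
    congr 1
    rw [inv_inv, abs_of_pos hn0, ENNReal.ofReal_natCast]
  calc (volume.restrict (Ioo (0:ℝ) 1)).map (fun u : ℝ => ((k:ℝ) + u)/n)
      = (volume.restrict ((fun u : ℝ => ((k:ℝ) + u)/n) ⁻¹' (Ioo ((k:ℝ)/n) (((k:ℝ)+1)/n)))).map
          (fun u : ℝ => ((k:ℝ) + u)/n) := by rw [hpre]
    _ = (volume.map (fun u : ℝ => ((k:ℝ) + u)/n)).restrict (Ioo ((k:ℝ)/n) (((k:ℝ)+1)/n)) :=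
        (Measure.restrict_map hmeas measurableSet_Ioo).symm
    _ = (n : ℝ≥0∞) • volume.restrict (Ioo ((k:ℝ)/n) (((k:ℝ)+1)/n)) := by
        rw [hmapvol, Measure.restrict_smul]

lemma map_affine_pi {p n : ℕ} (hn : 1 ≤ n) (k : Fin p → ℤ) :
    (Measure.pi fun _ : Fin p => volume.restrict (Ioo (0:ℝ) 1)).map
        (fun u (i : Fin p) => ((k i : ℝ) + u i)/n)
      = ((n : ℝ≥0∞)^p) • volume.restrict (univ.pi fun i => Ioo ((k i:ℝ)/n) (((k i:ℝ)+1)/n)) := by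
  haveI hfin : ∀ i : Fin p, IsFiniteMeasure
      ((n : ℝ≥0∞) • volume.restrict (Ioo ((k i:ℝ)/n) (((k i:ℝ)+1)/n))) := by
    intro i
    refine ⟨?_⟩
    rw [Measure.smul_apply, smul_eq_mul]
    exact ENNReal.mul_lt_top (by simp) (by
      rw [Measure.restrict_apply_univ]; exact measure_Ioo_lt_top)
  have hmp : ∀ i : Fin p, MeasurePreserving (fun u : ℝ => ((k i:ℝ) + u)/n)
      (volume.restrict (Ioo (0:ℝ) 1))
      ((n : ℝ≥0∞) • volume.restrict (Ioo ((k i:ℝ)/n) (((k i:ℝ)+1)/n))) := fun i =>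
    ⟨(measurable_id.const_add _).div_const _, map_affine_1d hn (k i)⟩
  rw [(measurePreserving_pi _ _ hmp).map_eq]
  refine Measure.pi_eq fun s hs => ?_
  rw [Measure.smul_apply, smul_eq_mul, Measure.restrict_apply (MeasurableSet.univ_pi hs),
    ← pi_inter_distrib, volume_pi, Measure.pi_pi]
  rw [Finset.prod_congr rfl (fun i _ => (Measure.smul_apply _ _ (s i)).trans
    (by rw [smul_eq_mul, Measure.restrict_apply (hs i)]))]
  rw [Finset.prod_mul_distrib, Finset.prod_const, Finset.card_univ, Fintype.card_fin]

theorem law_step {Ω : Type*} [MeasurableSpace Ω]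
    (P : Measure Ω) [IsProbabilityMeasure P] (p : ℕ)
    (X U : Ω → (Fin p → ℝ)) (hX : Measurable X) (hU : Measurable U)
    (hUlaw : P.map U = Measure.pi (fun _ => volume.restrict (Set.Ioo (0:ℝ) 1)))
    (hindep : IndepFun X U P)
    (Xn : ℕ → Ω → (Fin p → ℝ))
    (hXn : ∀ n ω i, Xn n ω i = ((⌊(n : ℝ) * X ω i⌋ : ℝ) + U ω i) / (n : ℝ))
    {n : ℕ} (hn : 1 ≤ n) {A : Set (Fin p → ℝ)} (hA : MeasurableSet A) :
    P.map (Xn n) A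
      = ∫⁻ x, (n : ℝ≥0∞)^p * volume (A ∩ box p n (flr p n x)) ∂(P.map X) := by
  set μ := P.map X with hμ
  set ν := Measure.pi (fun _ : Fin p => volume.restrict (Set.Ioo (0:ℝ) 1)) with hν
  haveI : IsProbabilityMeasure (volume.restrict (Set.Ioo (0:ℝ) 1)) := ⟨by simp⟩
  haveI : IsProbabilityMeasure ν := by rw [hν]; infer_instance
  set F : (Fin p → ℝ) × (Fin p → ℝ) → Fin p → ℝ :=
    fun q i => ((⌊(n:ℝ) * q.1 i⌋ : ℝ) + q.2 i)/n with hF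
  have hFm : Measurable F := by
    refine measurable_pi_lambda _ fun i => ?_
    have h1 : Measurable fun q : (Fin p → ℝ) × (Fin p → ℝ) => (⌊(n:ℝ) * q.1 i⌋ : ℝ) := by
      have : Measurable fun q : (Fin p → ℝ) × (Fin p → ℝ) => (⌊(n:ℝ) * q.1 i⌋ : ℤ) :=
        (((measurable_pi_apply i).comp measurable_fst).const_mul _).floor
      exact measurable_of_countable _ |>.comp this
    exact (h1.add ((measurable_pi_apply i).comp measurable_snd)).div_const _
  have hcomp : Xn n = F ∘ (fun ω => (X ω, U ω)) := by
    funext ω; funext i; exact hXn n ω i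
  have hjoint : P.map (fun ω => (X ω, U ω)) = μ.prod ν := by
    have := (indepFun_iff_map_prod_eq_prod_map_map hX.aemeasurable hU.aemeasurable).mp hindep
    rw [this, hUlaw]
  have hmapXn : P.map (Xn n) = (μ.prod ν).map F := by
    rw [hcomp, ← Measure.map_map hFm (hX.prodMk hU), hjoint]
  rw [hmapXn, Measure.map_apply hFm hA, Measure.prod_apply (hFm hA)]
  refine lintegral_congr fun x => ?_
  have hpre : Prod.mk x ⁻¹' (F ⁻¹' A) = (fun u (i : Fin p) => ((flr p n x i : ℝ) + u i)/n) ⁻¹' A := rfl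
  rw [hpre, ← Measure.map_apply (by
      refine measurable_pi_lambda _ fun i => ?_
      exact ((measurable_pi_apply i).const_add _).div_const _) hA]
  rw [hν, map_affine_pi hn (flr p n x), Measure.smul_apply, smul_eq_mul,
    Measure.restrict_apply hA]
  congr 1
  exact measure_congr (Filter.EventuallyEq.inter (ae_eq_refl _) (box_ae_Ioo p n (flr p n x)))

theorem fubini_step {p n : ℕ} (hn : 1 ≤ n) (μ : Measure (Fin p → ℝ)) [IsFiniteMeasure μ]
    (habs : μ ≪ volume) {A : Set (Fin p → ℝ)} (hA : MeasurableSet A) :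
    ∫⁻ x, (n : ℝ≥0∞)^p * volume (A ∩ box p n (flr p n x)) ∂μ
      = ∫⁻ z in A, (n : ℝ≥0∞)^p * μ (box p n (flr p n z)) ∂volume := by
  set c : ℝ≥0∞ := (n : ℝ≥0∞)^p with hc
  set rn := μ.rnDeriv volume with hrn_def
  have hrn : Measurable rn := Measure.measurable_rnDeriv μ volume
  have hwd : volume.withDensity rn = μ := Measure.withDensity_rnDeriv_eq μ volume habs
  set S : Set ((Fin p → ℝ) × (Fin p → ℝ)) := {q | flr p n q.2 = flr p n q.1} with hS
  have hSm : MeasurableSet S := by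
    have hD : MeasurableSet {kk : (Fin p → ℤ) × (Fin p → ℤ) | kk.2 = kk.1} :=
      (Set.to_countable _).measurableSet
    exact hD.preimage (((measurable_flr p n).comp measurable_fst).prodMk
      ((measurable_flr p n).comp measurable_snd))
  have hind : ∀ x z : Fin p → ℝ,
      (box p n (flr p n x)).indicator (fun _ => (1:ℝ≥0∞)) z = S.indicator 1 (x, z) := by
    intro x z
    by_cases h : flr p n z = flr p n x
    · rw [Set.indicator_of_mem ((mem_box_iff hn).2 h), Set.indicator_of_mem (by exact h)]
      rfl
    · rw [Set.indicator_of_notMem (fun hm => h ((mem_box_iff hn).1 hm)),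
        Set.indicator_of_notMem (by exact h)]
  have hφm : Measurable fun x => c * volume (A ∩ box p n (flr p n x)) :=
    (measurable_of_countable (fun k : Fin p → ℤ => c * volume (A ∩ box p n k))).comp
      (measurable_flr p n)
  conv_lhs => rw [← hwd]
  rw [lintegral_withDensity_eq_lintegral_mul volume hrn hφm]
  have hstep1 : ∀ x, rn x * (c * volume (A ∩ box p n (flr p n x)))
      = ∫⁻ z, rn x * c * A.indicator 1 z * S.indicator 1 (x, z) ∂volume := by
    intro x
    have h1 : volume (A ∩ box p n (flr p n x))
        = ∫⁻ z, A.indicator 1 z * S.indicator 1 (x, z) ∂volume := by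
      rw [← lintegral_indicator_one (hA.inter (measurableSet_box p n _))]
      refine lintegral_congr fun z => ?_
      rw [← hind x z, inter_indicator_one]
      rfl
    have hmS : Measurable fun z => S.indicator (1 : ((Fin p → ℝ) × (Fin p → ℝ)) → ℝ≥0∞) (x, z) :=
      (measurable_one.indicator hSm).comp measurable_prodMk_left
    have hm1 : Measurable fun z => A.indicator (1 : (Fin p → ℝ) → ℝ≥0∞) z * S.indicator 1 (x, z) :=
      (measurable_one.indicator hA).mul hmS
    rw [h1, ← lintegral_const_mul c hm1, ← lintegral_const_mul (rn x) (hm1.const_mul c)]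
    refine lintegral_congr fun z => by ring
  simp_rw [Pi.mul_apply, hstep1]
  rw [lintegral_lintegral_swap]
  · refine (lintegral_congr fun z => ?_).trans (lintegral_indicator hA _)
    by_cases hz : z ∈ A
    · conv_rhs => rw [Set.indicator_of_mem hz]
      have heq : ∀ x, rn x * c * A.indicator 1 z * S.indicator 1 (x, z)
          = c * ((box p n (flr p n z)).indicator rn x) := by
        intro x
        by_cases hx : flr p n x = flr p n z
        · rw [Set.indicator_of_mem hz, Set.indicator_of_mem (show (x,z) ∈ S from hx.symm),
            Set.indicator_of_mem ((mem_box_iff hn).2 hx)]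
          simp only [Pi.one_apply, mul_one]
          ring
        · rw [Set.indicator_of_notMem (show (x,z) ∉ S from fun h => hx (by exact h.symm)),
            Set.indicator_of_notMem (fun hm => hx ((mem_box_iff hn).1 hm))]
          simp
      simp_rw [heq]
      rw [lintegral_const_mul c (hrn.indicator (measurableSet_box p n _)),
        lintegral_indicator (measurableSet_box p n _),
        Measure.setLIntegral_rnDeriv habs]
    · simp [Set.indicator_of_notMem hz]
  · have h1 : Measurable (Function.uncurry fun x z =>
        rn x * c * A.indicator 1 z * S.indicator 1 (x, z)) := by
      refine (((hrn.comp measurable_fst).mul_const c).mul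
        ((measurable_one.indicator hA).comp measurable_snd)).mul ?_
      exact (measurable_one.indicator hSm).comp (measurable_fst.prodMk measurable_snd)
    exact h1.aemeasurable

end

end DTV

open MeasureTheory Set ProbabilityTheory
open Metric
open scoped ENNReal

/-- Discretization approximation: if `L(X) ≪ m_p`, `U` is uniform on `(0,1)^p`
independent of `X`, and `X^{(n)}_i = ([n X_i] + U_i)/n`, then the total variation
distance `sup_A |P(X ∈ A) − P(X^{(n)} ∈ A)|` tends to `0`. -/
theorem discretization_total_variation {Ω : Type*} [MeasurableSpace Ω]
    (P : Measure Ω) [IsProbabilityMeasure P] (p : ℕ) (hp : 1 ≤ p)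
    (X U : Ω → (Fin p → ℝ)) (hX : Measurable X) (hU : Measurable U)
    (habs : P.map X ≪ Measure.pi (fun _ => (volume : Measure ℝ)))
    (hUlaw : P.map U = Measure.pi (fun _ => volume.restrict (Set.Ioo (0:ℝ) 1)))
    (hindep : IndepFun X U P)
    (Xn : ℕ → Ω → (Fin p → ℝ))
    (hXn : ∀ n ω i, Xn n ω i = ((⌊(n : ℝ) * X ω i⌋ : ℝ) + U ω i) / (n : ℝ)) :
    ∀ ε > (0:ℝ), ∃ N : ℕ, ∀ n ≥ N, ∀ A : Set (Fin p → ℝ), MeasurableSet A →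
      |(P.map X A).toReal - (P.map (Xn n) A).toReal| ≤ ε := by
  intro ε hε
  classical
  set μ := P.map X with hμdef
  haveI : IsProbabilityMeasure μ := Measure.isProbabilityMeasure_map hX.aemeasurable
  have habs' : μ ≪ (volume : Measure (Fin p → ℝ)) := by
    rw [MeasureTheory.volume_pi]; exact habs
  set h' : (Fin p → ℝ) → ℝ := fun x => (μ.rnDeriv volume x).toReal with hh'
  have hh'meas : Measurable h' := (Measure.measurable_rnDeriv μ volume).ennreal_toReal
  have hInt : Integrable h' volume := Measure.integrable_toReal_rnDeriv
  have hh'nonneg : ∀ x, 0 ≤ h' x := fun x => ENNReal.toReal_nonneg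
  set G : ℕ → (Fin p → ℝ) → ℝ≥0∞ :=
    fun n z => (n : ℝ≥0∞)^p * μ (DTV.box p n (DTV.flr p n z)) with hG
  set g : ℕ → (Fin p → ℝ) → ℝ := fun n z => (G n z).toReal with hg
  have hGmeas : ∀ n, Measurable (G n) := fun n =>
    (measurable_of_countable (fun k : Fin p → ℤ => (n : ℝ≥0∞)^p * μ (DTV.box p n k))).comp
      (DTV.measurable_flr p n)
  have hGlt : ∀ n z, G n z < ⊤ := fun n z =>
    ENNReal.mul_lt_top (ENNReal.pow_lt_top (n := p) (ENNReal.natCast_lt_top n)) (measure_lt_top μ _)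
  have hgmeas : ∀ n, Measurable (g n) := fun n => (hGmeas n).ennreal_toReal
  have hgnonneg : ∀ n z, 0 ≤ g n z := fun n z => ENNReal.toReal_nonneg
  have hXnmeas : ∀ n : ℕ, Measurable (Xn n) := by
    intro n
    have : Xn n = fun ω i => ((⌊(n : ℝ) * X ω i⌋ : ℝ) + U ω i) / (n : ℝ) := by
      funext ω i; exact hXn n ω i
    rw [this]
    refine measurable_pi_lambda _ fun i => ?_
    have h1 : Measurable fun ω => (⌊(n:ℝ) * X ω i⌋ : ℝ) := by
      have : Measurable fun ω => (⌊(n:ℝ) * X ω i⌋ : ℤ) :=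
        (((measurable_pi_apply i).comp hX).const_mul _).floor
      exact measurable_of_countable _ |>.comp this
    exact (h1.add ((measurable_pi_apply i).comp hU)).div_const _
  haveI : ∀ n, IsProbabilityMeasure (P.map (Xn n)) := fun n =>
    Measure.isProbabilityMeasure_map (hXnmeas n).aemeasurable
  have hlaw : ∀ n : ℕ, 1 ≤ n → P.map (Xn n) = volume.withDensity (G n) := by
    intro n hn
    refine Measure.ext fun A hA => ?_
    rw [DTV.law_step P p X U hX hU hUlaw hindep Xn hXn hn hA,
      DTV.fubini_step hn μ habs' hA, withDensity_apply _ hA]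
  have hrepr : ∀ n : ℕ, 1 ≤ n → ∀ A : Set (Fin p → ℝ), MeasurableSet A →
      (P.map (Xn n) A).toReal = ∫ z in A, g n z ∂volume := by
    intro n hn A hA
    rw [hlaw n hn, withDensity_apply _ hA,
      ← integral_toReal ((hGmeas n).aemeasurable.restrict)
        (Filter.Eventually.of_forall fun z => hGlt n z)]
  have hgint : ∀ n : ℕ, 1 ≤ n → Integrable (g n) volume := by
    intro n hn
    refine integrable_toReal_of_lintegral_ne_top (hGmeas n).aemeasurable ?_
    have h1 : ∫⁻ z, G n z ∂volume = P.map (Xn n) univ := by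
      rw [hlaw n hn, withDensity_apply _ MeasurableSet.univ, Measure.restrict_univ]
    rw [h1, measure_univ]
    exact ENNReal.one_ne_top
  have hgone : ∀ n : ℕ, 1 ≤ n → ∫ z, g n z ∂volume = 1 := by
    intro n hn
    have := hrepr n hn univ MeasurableSet.univ
    rw [measure_univ, Measure.restrict_univ] at this
    simpa using this.symm
  have hh'one : ∫ z, h' z ∂volume = 1 := by
    rw [Measure.integral_toReal_rnDeriv habs', measureReal_def, measure_univ, ENNReal.toReal_one]
  have hae : ∀ᵐ x ∂(volume : Measure (Fin p → ℝ)),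
      Filter.Tendsto (fun n => g n x) Filter.atTop (nhds (h' x)) := by
    filter_upwards [IsUnifLocDoublingMeasure.ae_tendsto_average (volume : Measure (Fin p → ℝ))
      hInt.locallyIntegrable 1] with x hx
    set w : ℕ → Fin p → ℝ := fun n i => ((DTV.flr p n x i : ℝ) + 2⁻¹)/n with hw
    set δ : ℕ → ℝ := fun n => ((2:ℝ)*n)⁻¹ with hδdef
    have hends : ∀ n : ℕ, 1 ≤ n → ∀ i,
        w n i - δ n = (DTV.flr p n x i : ℝ)/n ∧ w n i + δ n = ((DTV.flr p n x i : ℝ)+1)/n := by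
      intro n hn i
      have hn0 : (0:ℝ) < n := by exact_mod_cast hn
      constructor
      · rw [hw, hδdef]; field_simp; ring
      · rw [hw, hδdef]; field_simp; ring
    have hδ : Filter.Tendsto δ Filter.atTop (nhdsWithin 0 (Set.Ioi 0)) := by
      rw [tendsto_nhdsWithin_iff]
      constructor
      · have h2 : Filter.Tendsto (fun n : ℕ => (2:ℝ)*n) Filter.atTop Filter.atTop :=
          (tendsto_natCast_atTop_atTop (R := ℝ)).const_mul_atTop two_pos
        exact tendsto_inv_atTop_zero.comp h2
      · filter_upwards [Filter.eventually_ge_atTop 1] with n hn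
        have hn0 : (0:ℝ) < n := by exact_mod_cast hn
        rw [Set.mem_Ioi, hδdef]
        positivity
    have hxmem : ∀ n : ℕ, 1 ≤ n → x ∈ Metric.closedBall (w n) (δ n) := by
      intro n hn
      have hn0 : (0:ℝ) < n := by exact_mod_cast hn
      have hδ0 : (0:ℝ) ≤ δ n := by rw [hδdef]; positivity
      rw [closedBall_pi _ hδ0, Set.mem_univ_pi]
      intro i
      rw [Real.closedBall_eq_Icc, Set.mem_Icc, (hends n hn i).1, (hends n hn i).2]
      have h1 : (DTV.flr p n x i : ℝ) ≤ (n:ℝ) * x i := Int.floor_le _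
      have h2 : (n:ℝ) * x i < (DTV.flr p n x i : ℝ) + 1 := Int.lt_floor_add_one _
      constructor
      · rw [div_le_iff₀ hn0]; linarith [mul_comm (x i) (n:ℝ)]
      · rw [le_div_iff₀ hn0]; linarith [mul_comm (x i) (n:ℝ)]
    have hmem : ∀ᶠ n in Filter.atTop, x ∈ Metric.closedBall (w n) (1 * δ n) := by
      filter_upwards [Filter.eventually_ge_atTop 1] with n hn
      rw [one_mul]; exact hxmem n hn
    have hkey := hx w δ hδ hmem
    refine hkey.congr' ?_
    filter_upwards [Filter.eventually_ge_atTop 1] with n hn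
    have hn0 : (0:ℝ) < n := by exact_mod_cast hn
    have hδ0 : (0:ℝ) ≤ δ n := by rw [hδdef]; positivity
    have hball : Metric.closedBall (w n) (δ n)
        = univ.pi fun i => Icc ((DTV.flr p n x i : ℝ)/n) (((DTV.flr p n x i : ℝ)+1)/n) := by
      rw [closedBall_pi _ hδ0]
      refine Set.pi_congr rfl fun i _ => ?_
      rw [Real.closedBall_eq_Icc, (hends n hn i).1, (hends n hn i).2]
    have hvol : volume (Metric.closedBall (w n) (δ n)) = (ENNReal.ofReal ((n:ℝ)⁻¹))^p := by
      rw [volume_pi_closedBall _ hδ0]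
      have h1 : ∀ i : Fin p, volume (Metric.closedBall (w n i) (δ n))
          = ENNReal.ofReal ((n:ℝ)⁻¹) := by
        intro i
        rw [Real.volume_closedBall]
        congr 1
        rw [hδdef]
        field_simp
      rw [Finset.prod_congr rfl (fun i _ => h1 i), Finset.prod_const, Finset.card_univ,
        Fintype.card_fin]
    have hint : ∫ y in Metric.closedBall (w n) (δ n), h' y ∂volume
        = (μ (DTV.box p n (DTV.flr p n x))).toReal := by
      rw [hball, ← setIntegral_congr_set (DTV.box_ae_Icc p n (DTV.flr p n x)),
        Measure.setIntegral_toReal_rnDeriv habs']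
      rfl
    rw [setAverage_eq, hint, measureReal_def, hvol]
    rw [ENNReal.toReal_pow, ENNReal.toReal_ofReal (by positivity : (0:ℝ) ≤ (n:ℝ)⁻¹)]
    show ((n:ℝ)⁻¹ ^ p)⁻¹ • (μ (DTV.box p n (DTV.flr p n x))).toReal = (G n x).toReal
    rw [hG]
    simp only [ENNReal.toReal_mul, ENNReal.toReal_pow, ENNReal.toReal_natCast]
    rw [smul_eq_mul, ← inv_pow, inv_inv]
  set φ : ℕ → (Fin p → ℝ) → ℝ := fun n z => max (h' z - g n z) 0 with hφdef
  have hφnonneg : ∀ n z, 0 ≤ φ n z := fun n z => le_max_right _ _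
  have hφmeas : ∀ n, AEStronglyMeasurable (φ n) volume := fun n =>
    ((hh'meas.sub (hgmeas n)).max measurable_const).aestronglyMeasurable
  have hφbound : ∀ n, ∀ᵐ z ∂(volume : Measure (Fin p → ℝ)), ‖φ n z‖ ≤ h' z := by
    intro n
    refine Filter.Eventually.of_forall fun z => ?_
    rw [Real.norm_eq_abs, abs_of_nonneg (hφnonneg n z)]
    exact max_le (by linarith [hgnonneg n z]) (hh'nonneg z)
  have hφint : ∀ n : ℕ, Integrable (φ n) volume := by
    intro n
    refine Integrable.mono hInt (hφmeas n) ?_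
    filter_upwards [hφbound n] with z hz
    rw [Real.norm_eq_abs (h' z), abs_of_nonneg (hh'nonneg z)]
    exact hz
  have hφtend0 : ∀ᵐ z ∂(volume : Measure (Fin p → ℝ)),
      Filter.Tendsto (fun n => φ n z) Filter.atTop (nhds 0) := by
    filter_upwards [hae] with z hz
    have h1 : Filter.Tendsto (fun n => max (h' z - g n z) 0) Filter.atTop
        (nhds (max (h' z - h' z) 0)) :=
      (tendsto_const_nhds.sub hz).max tendsto_const_nhds
    simpa using h1
  have hφint_tend : Filter.Tendsto (fun n => ∫ z, φ n z ∂volume) Filter.atTop (nhds 0) := by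
    have h0 : (0:ℝ) = ∫ _ : Fin p → ℝ, (0:ℝ) ∂(volume : Measure (Fin p → ℝ)) := by simp
    rw [h0]
    exact tendsto_integral_of_dominated_convergence h' hφmeas hInt hφbound hφtend0
  obtain ⟨N₁, hN₁⟩ := Metric.tendsto_atTop.mp hφint_tend (ε/2) (by linarith)
  refine ⟨max N₁ 1, fun n hn A hA => ?_⟩
  have hn1 : 1 ≤ n := le_trans (le_max_right _ _) hn
  have hnN : N₁ ≤ n := le_trans (le_max_left _ _) hn
  have hφsmall : ∫ z, φ n z ∂volume < ε/2 := by
    have h2 := hN₁ n hnN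
    rw [Real.dist_eq, sub_zero] at h2
    exact lt_of_le_of_lt (le_abs_self _) h2
  have hdiffint : Integrable (fun z => h' z - g n z) volume := hInt.sub (hgint n hn1)
  have habsdiff : ∫ z, |h' z - g n z| ∂volume = 2 * ∫ z, φ n z ∂volume := by
    have hid : ∀ z, |h' z - g n z| = 2 * φ n z - (h' z - g n z) := by
      intro z
      rcases le_total (g n z) (h' z) with h | h
      · rw [abs_of_nonneg (by linarith), hφdef]
        simp only [max_eq_left (by linarith : (0:ℝ) ≤ h' z - g n z)]
        ring
      · rw [abs_of_nonpos (by linarith), hφdef]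
        simp only [max_eq_right (by linarith : h' z - g n z ≤ (0:ℝ))]
        ring
    rw [integral_congr_ae (Filter.Eventually.of_forall hid),
      integral_sub ((hφint n).const_mul 2) hdiffint,
      integral_sub hInt (hgint n hn1), hh'one, hgone n hn1,
      MeasureTheory.integral_const_mul]
    ring
  have e1 : (P.map X A).toReal = ∫ z in A, h' z ∂volume :=
    (Measure.setIntegral_toReal_rnDeriv habs' A).symm
  rw [e1, hrepr n hn1 A hA, ← integral_sub hInt.restrict ((hgint n hn1).restrict)]
  calc |∫ z in A, (h' z - g n z) ∂volume| ≤ ∫ z in A, |h' z - g n z| ∂volume :=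
        by simpa [Real.norm_eq_abs] using
          norm_integral_le_integral_norm (μ := (volume : Measure (Fin p → ℝ)).restrict A)
            (fun z => h' z - g n z)
    _ ≤ ∫ z, |h' z - g n z| ∂volume :=
        setIntegral_le_integral hdiffint.abs
          (Filter.Eventually.of_forall fun z => abs_nonneg _)
    _ = 2 * ∫ z, φ n z ∂volume := habsdiff
    _ ≤ 2 * (ε/2) := by linarith
    _ = ε := by ring
end
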